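/- arXiv:1704.01928 — 7 statements merged into one kernel-verified Lean document; each statement's English description precedes it below -/
import Mathlib

section
/- Suppose measurable functions V, φ : E → (0,∞) and L-images LV, Lφ satisfy: (a) -Lφ ≤ C·1_{O_n} for some set O_n with inf_{O_n} φ > 0 and inf_{O_m} φ > 0 for all m, (b) LV + C'·V^{1+ε}/φ^ε ≤ C''·φ for constants C'>0, C''≥0, and (c) V/φ → ∞ out of the sets O_m (i.e. for every R>0 there is m with V(x)/φ(x) ≥ R for x ∉ O_m), with V bounded. Then there exist constants A>0 and B>0 such that for every probability measure μ on E: μ(LV) - μ(V)·μ(Lφ)/μ(φ) ≤ A·μ(φ) - B·μ(V)^{1+ε}/μ(φ)^ε. -/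
open MeasureTheory Set

private lemma integrable_of_bddm {E : Type*} [MeasurableSpace E] (μ : Measure E)
    [IsProbabilityMeasure μ] {f : E → ℝ} (hf : Measurable f) {C : ℝ} (hC : ∀ x, |f x| ≤ C) :
    Integrable f μ :=
  Integrable.mono' (integrable_const C) hf.aestronglyMeasurable
    (Filter.Eventually.of_forall fun x => by simpa using hC x)

private lemma memLp_of_bddm {E : Type*} [MeasurableSpace E] (μ : Measure E)
    [IsProbabilityMeasure μ] {f : E → ℝ} (hf : Measurable f) {C : ℝ} (hC : ∀ x, |f x| ≤ C)
    (p : ENNReal) : MemLp f p μ :=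
  (memLp_top_of_bound hf.aestronglyMeasurable C
    (Filter.Eventually.of_forall fun x => by simpa using hC x)).mono_exponent le_top

private lemma integral_pos_of_pos {E : Type*} [MeasurableSpace E] (μ : Measure E)
    [IsProbabilityMeasure μ] {f : E → ℝ} (hpos : ∀ x, 0 < f x) (hint : Integrable f μ) :
    0 < ∫ x, f x ∂μ := by
  rw [integral_pos_iff_support_of_nonneg (fun x => (hpos x).le) hint]
  have : Function.support f = Set.univ := by
    ext x; simp [Function.support, (hpos x).ne']
  simp [this]

/-- The simple Lyapunov criterion (conditions (a) and (b)) implies the nonlinear Lyapunov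
criterion: there are constants `A, B > 0` such that for every probability measure `μ`,
`μ(LV) - μ(V)·μ(Lφ)/μ(φ) ≤ A·μ(φ) - B·μ(V)^{1+ε}/μ(φ)^ε`. -/
theorem stmt2 {E : Type*} [MeasurableSpace E]
    (O : ℕ → Set E) (hOmeas : ∀ m, MeasurableSet (O m)) (hOmono : Monotone O)
    (hOcover : ⋃ m, O m = Set.univ)
    (V φ LV Lφ : E → ℝ) (ε : ℝ) (hε : 0 < ε)
    (hVmeas : Measurable V) (hφmeas : Measurable φ)
    (hLVmeas : Measurable LV) (hLφmeas : Measurable Lφ)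
    (hVbdd : ∃ C, ∀ x, |V x| ≤ C) (hφbdd : ∃ C, ∀ x, |φ x| ≤ C)
    (hLVbdd : ∃ C, ∀ x, |LV x| ≤ C) (hLφbdd : ∃ C, ∀ x, |Lφ x| ≤ C)
    (hVpos : ∀ x, 0 < V x) (hφpos : ∀ x, 0 < φ x)
    (hφinf : ∀ m, ∃ c > 0, ∀ x ∈ O m, c ≤ φ x)
    -- (a) : `-Lφ ≤ C·1_{O n}`
    (ha : ∃ n : ℕ, ∃ C ≥ (0:ℝ), ∀ x, -Lφ x ≤ C * (O n).indicator (fun _ => (1:ℝ)) x)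
    -- (b) : `LV + C'·V^{1+ε}/φ^ε ≤ C''·φ`
    (hb : ∃ C' > (0:ℝ), ∃ C'' ≥ (0:ℝ), ∀ x,
      LV x + C' * V x ^ (1 + ε) / φ x ^ ε ≤ C'' * φ x)
    -- (c) : `V/φ → ∞` out of the sets `O m`
    (hc : ∀ R > (0:ℝ), ∃ m : ℕ, ∀ x ∉ O m, R ≤ V x / φ x) :
    ∃ A > (0:ℝ), ∃ B > (0:ℝ), ∀ μ : Measure E, IsProbabilityMeasure μ →
      (∫ x, LV x ∂μ) - (∫ x, V x ∂μ) * (∫ x, Lφ x ∂μ) / (∫ x, φ x ∂μ) ≤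
        A * ∫ x, φ x ∂μ - B * (∫ x, V x ∂μ) ^ (1 + ε) / (∫ x, φ x ∂μ) ^ ε := by
  obtain ⟨n, C, hC0, hCa⟩ := ha
  obtain ⟨c, hc0, hcφ⟩ := hφinf n
  obtain ⟨C', hC'0, C'', hC''0, hbineq⟩ := hb
  obtain ⟨CV, hCV⟩ := hVbdd
  obtain ⟨Cφ, hCφ⟩ := hφbdd
  obtain ⟨CLV, hCLV⟩ := hLVbdd
  obtain ⟨CLφ, hCLφ⟩ := hLφbdd
  have hp0 : (0:ℝ) < 1 + ε := by linarith
  set K : ℝ := C / c with hK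
  have hK0 : 0 ≤ K := div_nonneg hC0 hc0.le
  set R0 : ℝ := (2 * K / C' + 1) ^ (1 / ε) with hR0def
  have hbase : (0:ℝ) < 2 * K / C' + 1 := by positivity
  have hR0pos : 0 < R0 := Real.rpow_pos_of_pos hbase _
  have hR0e : R0 ^ ε = 2 * K / C' + 1 := by
    rw [hR0def, ← Real.rpow_mul hbase.le, one_div, inv_mul_cancel₀ hε.ne', Real.rpow_one]
  have hKR0 : K ≤ C' / 2 * R0 ^ ε := by
    rw [hR0e]
    have h : C' / 2 * (2 * K / C' + 1) = K + C' / 2 := by field_simp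
    linarith
  -- pointwise: -Lφ ≤ K * φ
  have hLφpt : ∀ x, -Lφ x ≤ K * φ x := by
    intro x
    refine (hCa x).trans ?_
    by_cases hx : x ∈ O n
    · rw [Set.indicator_of_mem hx, mul_one]
      have h1 := hcφ x hx
      have : C = K * c := by rw [hK, div_mul_cancel₀ _ hc0.ne']
      nlinarith
    · rw [Set.indicator_of_notMem hx, mul_zero]
      exact mul_nonneg hK0 (hφpos x).le
  -- the function g₀ = V^{1+ε}/φ^ε and its bound
  set Dg : ℝ := (C'' * Cφ + CLV) / C' with hDg
  set g₀ : E → ℝ := fun x => V x ^ (1 + ε) / φ x ^ ε with hg₀def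
  have hg₀meas : Measurable g₀ := (hVmeas.pow measurable_const).div (hφmeas.pow measurable_const)
  have hg₀nonneg : ∀ x, 0 ≤ g₀ x := fun x =>
    div_nonneg (Real.rpow_nonneg (hVpos x).le _) (Real.rpow_nonneg (hφpos x).le _)
  have hg₀le : ∀ x, g₀ x ≤ Dg := by
    intro x
    have h1 := hbineq x
    rw [mul_div_assoc] at h1
    have h2 := abs_le.1 (hCLV x)
    have h3 := abs_le.1 (hCφ x)
    have h4 : C'' * φ x ≤ C'' * Cφ := by nlinarith
    rw [hDg, le_div_iff₀ hC'0]
    have : C' * g₀ x ≤ C'' * Cφ + CLV := by simp only [hg₀def]; nlinarith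
    nlinarith
  have hg₀bdd : ∀ x, |g₀ x| ≤ Dg := fun x => by
    rw [abs_of_nonneg (hg₀nonneg x)]; exact hg₀le x
  -- Hölder setup
  set e : ℝ := ε / (1 + ε) with hedef
  have he0 : 0 < e := by positivity
  have he1 : e ≤ 1 := by rw [hedef, div_le_one hp0]; linarith
  set f : E → ℝ := fun x => V x / φ x ^ e with hfdef
  set g : E → ℝ := fun x => φ x ^ e with hgdef
  have hfnonneg : ∀ x, 0 ≤ f x := fun x =>
    div_nonneg (hVpos x).le (Real.rpow_nonneg (hφpos x).le _)
  have hgnonneg : ∀ x, 0 ≤ g x := fun x => Real.rpow_nonneg (hφpos x).le _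
  have hfp : ∀ x, f x ^ (1 + ε) = g₀ x := by
    intro x
    simp only [hfdef, hg₀def]
    rw [Real.div_rpow (hVpos x).le (Real.rpow_nonneg (hφpos x).le _),
      ← Real.rpow_mul (hφpos x).le, hedef, div_mul_cancel₀]
    positivity
  have hgq : ∀ x, g x ^ ((1 + ε) / ε) = φ x := by
    intro x
    simp only [hgdef]
    rw [← Real.rpow_mul (hφpos x).le, hedef, div_mul_div_comm, mul_comm,
      div_self (by positivity), Real.rpow_one]
  have hpq : (1 + ε).HolderConjugate ((1 + ε) / ε) := by
    rw [Real.holderConjugate_iff]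
    constructor
    · linarith
    · field_simp
  -- boundedness of f and g
  have hfbdd : ∀ x, |f x| ≤ max 1 Dg := by
    intro x
    rw [abs_of_nonneg (hfnonneg x)]
    rcases le_or_gt (f x) 1 with h | h
    · exact h.trans (le_max_left _ _)
    · have h1 : f x ^ (1:ℝ) ≤ f x ^ (1 + ε) :=
        Real.rpow_le_rpow_of_exponent_le h.le (by linarith)
      rw [Real.rpow_one] at h1
      exact h1.trans ((hfp x ▸ hg₀le x).trans (le_max_right _ _))
  have hgbdd : ∀ x, |g x| ≤ max 1 Cφ := by
    intro x
    rw [abs_of_nonneg (hgnonneg x)]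
    rcases le_or_gt (φ x) 1 with h | h
    · exact (Real.rpow_le_one (hφpos x).le h he0.le).trans (le_max_left _ _)
    · have h1 : φ x ^ e ≤ φ x ^ (1:ℝ) := Real.rpow_le_rpow_of_exponent_le h.le he1
      rw [Real.rpow_one] at h1
      exact h1.trans ((abs_le.1 (hCφ x)).2.trans (le_max_right _ _))
  have hfmeas : Measurable f := hVmeas.div (hφmeas.pow measurable_const)
  have hgmeas : Measurable g := hφmeas.pow measurable_const
  -- the constants
  refine ⟨C'' + K * R0 + 1, by positivity, C' / 2, by positivity, ?_⟩
  intro μ hμ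
  have iV : Integrable V μ := integrable_of_bddm μ hVmeas hCV
  have iφ : Integrable φ μ := integrable_of_bddm μ hφmeas hCφ
  have iLV : Integrable LV μ := integrable_of_bddm μ hLVmeas hCLV
  have iLφ : Integrable Lφ μ := integrable_of_bddm μ hLφmeas hCLφ
  have ig₀ : Integrable g₀ μ := integrable_of_bddm μ hg₀meas hg₀bdd
  set mV : ℝ := ∫ x, V x ∂μ with hmV
  set mφ : ℝ := ∫ x, φ x ∂μ with hmφ
  have mVpos : 0 < mV := integral_pos_of_pos μ hVpos iV
  have mφpos : 0 < mφ := integral_pos_of_pos μ hφpos iφ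
  have Ig₀nonneg : 0 ≤ ∫ x, g₀ x ∂μ := integral_nonneg hg₀nonneg
  -- key1 : ∫ LV ≤ C'' * mφ - C' * ∫ g₀
  have key1 : (∫ x, LV x ∂μ) + C' * ∫ x, g₀ x ∂μ ≤ C'' * mφ := by
    have h : ∫ x, (LV x + C' * g₀ x) ∂μ ≤ ∫ x, C'' * φ x ∂μ := by
      refine integral_mono (iLV.add (ig₀.const_mul C')) (iφ.const_mul C'') fun x => ?_
      have h1 := hbineq x
      rw [mul_div_assoc] at h1
      exact h1
    rwa [integral_add iLV (ig₀.const_mul C'), integral_const_mul, integral_const_mul] at h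
  -- key3 : -∫ Lφ ≤ K * mφ
  have key3 : -(∫ x, Lφ x ∂μ) ≤ K * mφ := by
    have h : ∫ x, -Lφ x ∂μ ≤ ∫ x, K * φ x ∂μ :=
      integral_mono iLφ.neg (iφ.const_mul K) hLφpt
    rwa [integral_neg, integral_const_mul] at h
  -- Hölder : mV ≤ (∫ g₀)^(1/(1+ε)) * mφ^(ε/(1+ε))
  have hHolder : mV ≤ (∫ x, g₀ x ∂μ) ^ (1 / (1 + ε)) * mφ ^ e := by
    have h := integral_mul_le_Lp_mul_Lq_of_nonneg (μ := μ) hpq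
      (Filter.Eventually.of_forall hfnonneg) (Filter.Eventually.of_forall hgnonneg)
      (memLp_of_bddm μ hfmeas hfbdd _) (memLp_of_bddm μ hgmeas hgbdd _)
    have hfg : ∀ x, f x * g x = V x := by
      intro x
      simp only [hfdef, hgdef]
      rw [div_mul_cancel₀]
      exact (Real.rpow_pos_of_pos (hφpos x) _).ne'
    rw [integral_congr_ae (Filter.Eventually.of_forall hfg),
      integral_congr_ae (Filter.Eventually.of_forall fun x => hfp x),
      integral_congr_ae (Filter.Eventually.of_forall fun x => hgq x)] at h
    have h1q : 1 / ((1 + ε) / ε) = e := by rw [hedef, one_div_div]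
    rwa [h1q, ← hmV, ← hmφ] at h
  -- key2 : mV ^ (1+ε) ≤ (∫ g₀) * mφ ^ ε
  have key2 : mV ^ (1 + ε) ≤ (∫ x, g₀ x ∂μ) * mφ ^ ε := by
    have h := Real.rpow_le_rpow mVpos.le hHolder hp0.le
    rwa [Real.mul_rpow (Real.rpow_nonneg Ig₀nonneg _) (Real.rpow_nonneg mφpos.le _),
      ← Real.rpow_mul Ig₀nonneg, ← Real.rpow_mul mφpos.le, one_div_mul_cancel hp0.ne',
      Real.rpow_one, hedef, div_mul_cancel₀ _ hp0.ne'] at h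
  set X : ℝ := mV ^ (1 + ε) / mφ ^ ε with hX
  have hXnonneg : 0 ≤ X := div_nonneg (Real.rpow_nonneg mVpos.le _) (Real.rpow_nonneg mφpos.le _)
  have hXle : X ≤ ∫ x, g₀ x ∂μ := by
    rw [hX, div_le_iff₀ (Real.rpow_pos_of_pos mφpos _)]
    exact key2
  -- cross term : -(mV * ∫ Lφ / mφ) ≤ K * mV
  have cross : -(mV * (∫ x, Lφ x ∂μ) / mφ) ≤ K * mV := by
    rw [neg_div' ,← mul_neg, div_le_iff₀ mφpos]
    calc mV * -(∫ x, Lφ x ∂μ) ≤ mV * (K * mφ) :=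
          mul_le_mul_of_nonneg_left key3 mVpos.le
      _ = K * mV * mφ := by ring
  -- finish
  have hgoal : C' / 2 * mV ^ (1 + ε) / mφ ^ ε = C' / 2 * X := by rw [hX, mul_div_assoc]
  rw [hgoal]
  have main : (∫ x, LV x ∂μ) - mV * (∫ x, Lφ x ∂μ) / mφ ≤ C'' * mφ - C' * X + K * mV := by
    have := mul_le_mul_of_nonneg_left hXle hC'0.le
    linarith
  have h2 : (C'' + K * R0 + 1) * mφ = C'' * mφ + K * (R0 * mφ) + mφ := by ring
  have h4 : C' / 2 * X + C' / 2 * X = C' * X := by ring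
  have h5 : 0 ≤ C' / 2 * X := mul_nonneg (by positivity) hXnonneg
  rcases le_or_gt mV (R0 * mφ) with hcase | hcase
  · have h1 : K * mV ≤ K * (R0 * mφ) := mul_le_mul_of_nonneg_left hcase hK0
    linarith [main, h1, h2, h4, h5, mφpos.le]
  · -- K * mV ≤ C'/2 * X
    have hrat : R0 ≤ mV / mφ := (le_div_iff₀ mφpos).2 (by linarith)
    have hXeq : X = mV * (mV / mφ) ^ ε := by
      rw [hX, Real.rpow_one_add' mVpos.le (by positivity), mul_div_assoc,
        Real.div_rpow mVpos.le mφpos.le]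
    have hre : R0 ^ ε ≤ (mV / mφ) ^ ε := Real.rpow_le_rpow hR0pos.le hrat hε.le
    have hKmV : K * mV ≤ C' / 2 * X := by
      rw [hXeq]
      have h5 : (0:ℝ) ≤ C' / 2 * mV := by positivity
      have h6 := mul_le_mul_of_nonneg_left hre h5
      calc K * mV ≤ (C' / 2 * R0 ^ ε) * mV :=
            mul_le_mul_of_nonneg_right hKR0 mVpos.le
        _ ≤ C' / 2 * (mV * (mV / mφ) ^ ε) := by linarith [h6]
    have h7 : 0 ≤ K * (R0 * mφ) := mul_nonneg hK0 (mul_nonneg hR0pos.le mφpos.le)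
    linarith [main, hKmV, h2, h4, h7, mφpos.le]
end

section
/- Define for a Lotka-Volterra birth-death process with rates b_i(n)=λ_i+∑_j γ_{ij} n_j and d_i(n)=μ_i+∑_j c_{ij} n_j the quantities d̄(k)=sup_{n∈ℕ^d,|n|=k} |n|∑_i 1_{n_i=1} d_i(n) and d_(k)=inf_{n∈ℕ^d,|n|=k} ∑_i n_i[1_{n_i≠1} d_i(n) − b_i(n)]. If ∑_{i,j} x_i(c_{ij}−γ_{ij})x_j ≥ C'|x|² for all x∈ℝ₊^d with C'>0 and all parameters λ_i, μ_i, c_{ij}, γ_{ij} ≥ 0, then d̄(k) ≤ C k² for some constant C, d_(k) ≥ C'k² − Ck for some constant C, and consequently there exists η>0 such that for all sufficiently large k: d_(k) ≥ η·d̄(k) and d_(k)/k^{1+η} → ∞. -/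
open Finset Filter

/-- `d̄(k) = sup_{n∈ℕ^d, |n|=k} |n| ∑_i 1_{n_i=1} d_i(n)`. -/
noncomputable def dbar {d : ℕ} (dth : (Fin d → ℕ) → Fin d → ℝ) (k : ℕ) : ℝ :=
  sSup {y | ∃ n : Fin d → ℕ, (∀ i, 1 ≤ n i) ∧ (∑ i, n i = k) ∧
    y = (k : ℝ) * ∑ i, (if n i = 1 then dth n i else 0)}

/-- `d_(k) = inf_{n∈ℕ^d, |n|=k} ∑_i n_i [1_{n_i≠1} d_i(n) − b_i(n)]`. -/
noncomputable def dund {d : ℕ} (b dth : (Fin d → ℕ) → Fin d → ℝ) (k : ℕ) : ℝ :=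
  sInf {y | ∃ n : Fin d → ℕ, (∀ i, 1 ≤ n i) ∧ (∑ i, n i = k) ∧
    y = ∑ i, (n i : ℝ) * ((if n i ≠ 1 then dth n i else 0) - b n i)}

set_option maxHeartbeats 2000000 in
/-- For Lotka-Volterra rates with a coercive competition matrix, `d̄(k) ≤ Ck²`,
`d_(k) ≥ C'k² − Ck`, and consequently `d_(k) ≥ η d̄(k)` for large `k` and
`d_(k)/k^{1+η} → ∞`. -/
theorem stmt5 (d : ℕ) (hd : 2 ≤ d) (lam mu : Fin d → ℝ) (Γ c : Fin d → Fin d → ℝ)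
    (hlam : ∀ i, 0 ≤ lam i) (hmu : ∀ i, 0 ≤ mu i)
    (hΓ : ∀ i j, 0 ≤ Γ i j) (hcmat : ∀ i j, 0 ≤ c i j)
    (C' : ℝ) (hC' : 0 < C')
    (hquad : ∀ x : Fin d → ℝ, (∀ i, 0 ≤ x i) →
      C' * (∑ i, x i) ^ 2 ≤ ∑ i, ∑ j, x i * (c i j - Γ i j) * x j)
    (b dth : (Fin d → ℕ) → Fin d → ℝ)
    (hb : ∀ n i, b n i = lam i + ∑ j, Γ i j * (n j : ℝ))
    (hdth : ∀ n i, dth n i = mu i + ∑ j, c i j * (n j : ℝ)) :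
    (∃ C : ℝ, ∀ k : ℕ, dbar dth k ≤ C * (k : ℝ) ^ 2) ∧
    (∃ C : ℝ, ∀ k : ℕ, C' * (k : ℝ) ^ 2 - C * (k : ℝ) ≤ dund b dth k) ∧
    ∃ η > (0:ℝ), (∃ K : ℕ, ∀ k ≥ K, η * dbar dth k ≤ dund b dth k) ∧
      Tendsto (fun k : ℕ => dund b dth k / (k : ℝ) ^ (1 + η)) atTop atTop := by

  -- Constants
  set Smu : ℝ := ∑ i, mu i with hSmu
  set Sc : ℝ := ∑ i, ∑ j, c i j with hScdef
  set SL : ℝ := ∑ i, lam i with hSLdef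
  have hSmu0 : 0 ≤ Smu := Finset.sum_nonneg fun i _ => hmu i
  have hSc0 : 0 ≤ Sc := Finset.sum_nonneg fun i _ => Finset.sum_nonneg fun j _ => hcmat i j
  have hSL0 : 0 ≤ SL := Finset.sum_nonneg fun i _ => hlam i
  set A : ℝ := Smu + Sc with hAdef
  have hA0 : 0 ≤ A := add_nonneg hSmu0 hSc0
  set C₂ : ℝ := max (A + SL) (C' * d) with hC2def
  have hC2a : A + SL ≤ C₂ := le_max_left _ _
  have hC2b : C' * d ≤ C₂ := le_max_right _ _
  have hC20 : 0 ≤ C₂ := le_trans (add_nonneg hA0 hSL0) hC2a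
  have hdth0 : ∀ (n : Fin d → ℕ) (i : Fin d), 0 ≤ dth n i := by
    intro n i
    rw [hdth]
    exact add_nonneg (hmu i) (Finset.sum_nonneg fun j _ =>
      mul_nonneg (hcmat i j) (Nat.cast_nonneg _))
  -- basic facts about configurations
  have hkd : ∀ (k : ℕ) (n : Fin d → ℕ), (∀ i, 1 ≤ n i) → (∑ i, n i = k) → d ≤ k := by
    intro k n hn1 hns
    calc d = ∑ _i : Fin d, 1 := by simp
    _ ≤ ∑ i, n i := Finset.sum_le_sum fun i _ => hn1 i
    _ = k := hns
  have hnk : ∀ (k : ℕ) (n : Fin d → ℕ), (∑ i, n i = k) → ∀ j, (n j : ℝ) ≤ k := by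
    intro k n hns j
    have : n j ≤ k := hns ▸ Finset.single_le_sum (f := fun i => n i)
      (fun i _ => Nat.zero_le _) (Finset.mem_univ j)
    exact_mod_cast this
  have hdthsum : ∀ (k : ℕ) (n : Fin d → ℕ), (∀ i, 1 ≤ n i) → (∑ i, n i = k) →
      ∑ i, dth n i ≤ A * k := by
    intro k n hn1 hns
    have hk1 : (1:ℝ) ≤ k := by
      have := hkd k n hn1 hns; exact_mod_cast le_trans (le_trans one_le_two hd) this
    have h1 : ∑ i, dth n i = Smu + ∑ i, ∑ j, c i j * (n j : ℝ) := by
      simp [hdth, Finset.sum_add_distrib, hSmu]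
    have h2 : ∑ i, ∑ j, c i j * (n j : ℝ) ≤ ∑ i, ∑ j, c i j * (k : ℝ) := by
      gcongr with i _ j _
      · exact hcmat i j
      · exact_mod_cast hnk k n hns j
    have h3 : ∑ i, ∑ j, c i j * (k : ℝ) = Sc * k := by
      rw [hScdef, Finset.sum_mul]
      exact Finset.sum_congr rfl fun i _ => (Finset.sum_mul _ _ _).symm
    rw [h1, hAdef]
    nlinarith [h3 ▸ h2]
  -- first claim
  have hdbar : ∀ k : ℕ, dbar dth k ≤ A * (k : ℝ) ^ 2 := by
    intro k
    apply Real.sSup_le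
    · rintro y ⟨n, hn1, hns, rfl⟩
      have hk1 : (1:ℝ) ≤ k := by
        have := hkd k n hn1 hns; exact_mod_cast le_trans (le_trans one_le_two hd) this
      have h1 : ∑ i, (if n i = 1 then dth n i else 0) ≤ ∑ i, dth n i :=
        Finset.sum_le_sum fun i _ => by split <;> [exact le_rfl; exact hdth0 n i]
      have h2 := le_trans h1 (hdthsum k n hn1 hns)
      calc (k : ℝ) * ∑ i, (if n i = 1 then dth n i else 0)
          ≤ (k : ℝ) * (A * k) := by
            apply mul_le_mul_of_nonneg_left h2 (by linarith)
        _ = A * (k : ℝ) ^ 2 := by ring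
    · positivity
  -- second claim
  have hdund : ∀ k : ℕ, C' * (k : ℝ) ^ 2 - C₂ * (k : ℝ) ≤ dund b dth k := by
    intro k
    by_cases hS : {y | ∃ n : Fin d → ℕ, (∀ i, 1 ≤ n i) ∧ (∑ i, n i = k) ∧
        y = ∑ i, (n i : ℝ) * ((if n i ≠ 1 then dth n i else 0) - b n i)}.Nonempty
    · apply le_csInf hS
      rintro y ⟨n, hn1, hns, rfl⟩
      have hdk : d ≤ k := hkd k n hn1 hns
      have hk1 : (1:ℝ) ≤ k := by exact_mod_cast le_trans (le_trans one_le_two hd) hdk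
      have hcast : ∑ i, (n i : ℝ) = k := by exact_mod_cast hns
      have hquad' : C' * (∑ i, (n i : ℝ)) ^ 2
          ≤ ∑ i, ∑ j, (n i : ℝ) * (c i j - Γ i j) * (n j : ℝ) :=
        hquad (fun i => (n i : ℝ)) (fun i => Nat.cast_nonneg _)
      rw [hcast] at hquad'
      have hterm : ∀ i ∈ Finset.univ,
          (n i : ℝ) * mu i - (n i : ℝ) * lam i
            + (∑ j, (n i : ℝ) * (c i j - Γ i j) * (n j : ℝ)) - dth n i
          ≤ (n i : ℝ) * ((if n i ≠ 1 then dth n i else 0) - b n i) := by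
        intro i _
        have hrw : (n i : ℝ) * (dth n i - b n i)
            = (n i : ℝ) * mu i - (n i : ℝ) * lam i
              + ∑ j, (n i : ℝ) * (c i j - Γ i j) * (n j : ℝ) := by
          have h0 : ∑ j, (n i : ℝ) * (c i j - Γ i j) * (n j : ℝ)
              = (n i : ℝ) * (∑ j, c i j * (n j : ℝ) - ∑ j, Γ i j * (n j : ℝ)) := by
            rw [← Finset.sum_sub_distrib, Finset.mul_sum]
            exact Finset.sum_congr rfl fun j _ => by ring
          rw [hdth, hb, h0]; ring
        by_cases h : n i = 1
        · have h1 : (n i : ℝ) = 1 := by rw [h]; norm_num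
          simp only [h, ne_eq, not_true_eq_false, if_false]
          rw [h1] at hrw
          push_cast
          linarith
        · simp only [ne_eq, h, not_false_eq_true, if_true]
          have := hdth0 n i
          linarith [hrw]
      have hsum := Finset.sum_le_sum hterm
      have hdecomp : ∑ i, ((n i : ℝ) * mu i - (n i : ℝ) * lam i
            + (∑ j, (n i : ℝ) * (c i j - Γ i j) * (n j : ℝ)) - dth n i)
          = (∑ i, (n i : ℝ) * mu i) - (∑ i, (n i : ℝ) * lam i)
            + (∑ i, ∑ j, (n i : ℝ) * (c i j - Γ i j) * (n j : ℝ)) - ∑ i, dth n i := by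
        rw [Finset.sum_sub_distrib, Finset.sum_add_distrib, Finset.sum_sub_distrib]
      rw [hdecomp] at hsum
      have hmu' : 0 ≤ ∑ i, (n i : ℝ) * mu i :=
        Finset.sum_nonneg fun i _ => mul_nonneg (Nat.cast_nonneg _) (hmu i)
      have hlam' : ∑ i, (n i : ℝ) * lam i ≤ (k : ℝ) * SL := by
        rw [hSLdef, Finset.mul_sum]
        exact Finset.sum_le_sum fun i _ =>
          mul_le_mul_of_nonneg_right (hnk k n hns i) (hlam i)
      have hA' := hdthsum k n hn1 hns
      nlinarith [hsum, hquad', hmu', hlam', hA', hC2a]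
    · rw [dund, Set.not_nonempty_iff_eq_empty.mp hS, Real.sInf_empty]
      have hkd' : k < d := by
        by_contra hcon
        push_neg at hcon
        apply hS
        refine ⟨_, fun i => 1 + if i = (⟨0, by omega⟩ : Fin d) then k - d else 0,
          fun i => Nat.le_add_right _ _, ?_, rfl⟩
        rw [Finset.sum_add_distrib]
        simp only [Finset.sum_const, Finset.card_univ, Fintype.card_fin, smul_eq_mul,
          mul_one, Finset.sum_ite_eq', Finset.mem_univ, if_true]
        omega
      have hkr : (k : ℝ) ≤ d := by exact_mod_cast le_of_lt hkd'
      have hk0 : (0:ℝ) ≤ k := Nat.cast_nonneg _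
      have h1 : C' * (k:ℝ) ≤ C' * d := mul_le_mul_of_nonneg_left hkr (le_of_lt hC')
      nlinarith [mul_le_mul_of_nonneg_right h1 hk0, mul_le_mul_of_nonneg_right hC2b hk0]
  refine ⟨⟨A, hdbar⟩, ⟨C₂, hdund⟩, ?_⟩
  -- third claim
  set η : ℝ := min (1/2) (C' / (2 * (A + 1))) with hηdef
  have hη0 : 0 < η := lt_min (by norm_num) (by positivity)
  have hηhalf : η ≤ 1/2 := min_le_left _ _
  have hηA : η * A ≤ C' / 2 := by
    have h1 : η ≤ C' / (2 * (A + 1)) := min_le_right _ _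
    have h2 : η * (A + 1) ≤ (C' / (2 * (A + 1))) * (A + 1) := by
      apply mul_le_mul_of_nonneg_right h1 (by linarith)
    have h3 : (C' / (2 * (A + 1))) * (A + 1) = C' / 2 := by
      field_simp
    nlinarith
  have hKkey : ∀ k : ℕ, (2 * C₂ / C' ≤ (k : ℝ)) →
      (C' / 2) * (k : ℝ) ^ 2 ≤ C' * (k : ℝ) ^ 2 - C₂ * (k : ℝ) := by
    intro k hk
    have hk0 : (0:ℝ) ≤ k := Nat.cast_nonneg _
    have h2 : 2 * C₂ ≤ C' * k := by
      rw [div_le_iff₀ hC'] at hk; linarith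
    nlinarith [mul_le_mul_of_nonneg_right h2 hk0]
  set K : ℕ := ⌈2 * C₂ / C'⌉₊ + 1 with hKdef
  have hKge : ∀ k : ℕ, K ≤ k → 2 * C₂ / C' ≤ (k : ℝ) := by
    intro k hk
    calc 2 * C₂ / C' ≤ (⌈2 * C₂ / C'⌉₊ : ℝ) := Nat.le_ceil _
    _ ≤ (k : ℝ) := by exact_mod_cast le_trans (Nat.le_succ _) hk
  have hK1 : ∀ k : ℕ, K ≤ k → (1:ℝ) ≤ k := by
    intro k hk
    have : 1 ≤ k := le_trans (Nat.le_add_left 1 _) hk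
    exact_mod_cast this
  refine ⟨η, hη0, ⟨K, ?_⟩, ?_⟩
  · intro k hk
    have h1 : η * dbar dth k ≤ η * (A * (k : ℝ) ^ 2) :=
      mul_le_mul_of_nonneg_left (hdbar k) (le_of_lt hη0)
    have h2 : η * (A * (k : ℝ) ^ 2) ≤ (C' / 2) * (k : ℝ) ^ 2 := by
      have := sq_nonneg ((k : ℝ))
      nlinarith
    exact le_trans h1 (le_trans h2 (le_trans (hKkey k (hKge k hk)) (hdund k)))
  · have hlim : Tendsto (fun k : ℕ => (C' / 2) * (k : ℝ) ^ (1 - η)) atTop atTop := by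
      apply Tendsto.const_mul_atTop (by positivity)
      exact (tendsto_rpow_atTop (by simp only [hηdef]; linarith [min_le_left (1/2:ℝ) (C' / (2 * (A + 1)))] : (0:ℝ) < 1 - η)).comp tendsto_natCast_atTop_atTop
    apply tendsto_atTop_mono' atTop ?_ hlim
    filter_upwards [eventually_ge_atTop K] with k hk
    have hk1 : (1:ℝ) ≤ k := hK1 k hk
    have hkpos : (0:ℝ) < k := by linarith
    have hdd : (C' / 2) * (k : ℝ) ^ 2 ≤ dund b dth k :=
      le_trans (hKkey k (hKge k hk)) (hdund k)
    have hrpow : (k : ℝ) ^ (1 - η) = (k : ℝ) ^ 2 / (k : ℝ) ^ (1 + η) := by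
      rw [show ((k:ℝ)^2 : ℝ) = (k:ℝ) ^ ((2:ℕ):ℝ) from (Real.rpow_natCast _ 2).symm,
        ← Real.rpow_sub hkpos]
      congr 1
      push_cast
      ring
    rw [hrpow, ← mul_div_assoc]
    gcongr
end

section
/- Let β>1 and φ(n) = ∑_{k=|n|+1}^{∞} k^{-β} for n∈ℕ^d, φ=0 on ℤ₊^d∖ℕ^d. Then for the birth-death generator L one has Lφ(n) ≥ |n|^{-β} [d_(|n|) − d̄(|n|)/(β−1)] for all n∈ℕ^d, where d_(k)=inf_{m:|m|=k} ∑_i m_i(1_{m_i≠1} d_i(m)−b_i(m)) and d̄(k)=sup_{m:|m|=k} |m| ∑_i 1_{m_i=1} d_i(m). Consequently, if d_(k) ≥ η d̄(k) for all large k, there exists β>1 such that Lφ(n) ≥ 0 for all n with |n| large enough. -/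
open Finset

/-- The function `φ(n) = ∑_{k=|n|+1}^∞ k^{-β}` on `ℕ^d`, extended by `0` when some
coordinate vanishes. -/
noncomputable def phiFun {d : ℕ} (β : ℝ) (m : Fin d → ℕ) : ℝ :=
  if ∀ i, 1 ≤ m i then ∑' k : ℕ, ((∑ i, (m i : ℝ)) + 1 + (k : ℝ)) ^ (-β) else 0

/-- Generator of the multitype birth-death process applied to a function `f`. -/
noncomputable def bdGen7 {d : ℕ} (b dth : (Fin d → ℕ) → Fin d → ℝ)
    (f : (Fin d → ℕ) → ℝ) (n : Fin d → ℕ) : ℝ :=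
  ∑ j, (f (fun i => n i + if i = j then 1 else 0) - f n) * (n j : ℝ) * b n j +
  ∑ j, (f (fun i => n i - if i = j then 1 else 0) - f n) * (n j : ℝ) * dth n j

/-- `d_(k)`. -/
noncomputable def dund7 {d : ℕ} (b dth : (Fin d → ℕ) → Fin d → ℝ) (k : ℕ) : ℝ :=
  sInf {y | ∃ m : Fin d → ℕ, (∀ i, 1 ≤ m i) ∧ (∑ i, m i = k) ∧
    y = ∑ i, (m i : ℝ) * ((if m i ≠ 1 then dth m i else 0) - b m i)}

/-- `d̄(k)`. -/
noncomputable def dbar7 {d : ℕ} (dth : (Fin d → ℕ) → Fin d → ℝ) (k : ℕ) : ℝ :=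
  sSup {y | ∃ m : Fin d → ℕ, (∀ i, 1 ≤ m i) ∧ (∑ i, m i = k) ∧
    y = (k : ℝ) * ∑ i, (if m i = 1 then dth m i else 0)}

noncomputable def Gfun (β a : ℝ) : ℝ := ∑' k : ℕ, (a + 1 + (k : ℝ)) ^ (-β)

lemma gsummable {β : ℝ} (hβ : 1 < β) {a : ℝ} (ha : 0 ≤ a) :
    Summable (fun k : ℕ => (a + 1 + (k : ℝ)) ^ (-β)) := by
  have h1 : Summable (fun k : ℕ => ((k + 1 : ℕ) : ℝ) ^ (-β)) :=
    (summable_nat_add_iff 1).2 (Real.summable_nat_rpow.2 (by linarith))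
  refine Summable.of_nonneg_of_le (fun k => Real.rpow_nonneg (by positivity) _) (fun k => ?_) h1
  have hk : (0:ℝ) < ((k + 1 : ℕ) : ℝ) := by positivity
  exact Real.rpow_le_rpow_of_nonpos hk (by push_cast; linarith) (by linarith)

lemma gstep {β : ℝ} (hβ : 1 < β) {a : ℝ} (ha : 0 ≤ a) :
    Gfun β a = (a + 1) ^ (-β) + Gfun β (a + 1) := by
  rw [Gfun, Summable.tsum_eq_zero_add (gsummable hβ ha)]
  congr 1
  · norm_num
  · rw [Gfun]
    refine tsum_congr fun k => ?_
    push_cast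
    ring_nf

lemma bern_step {β : ℝ} (hβ : 1 < β) {x : ℝ} (hx : 1 ≤ x) :
    (β - 1) * (x + 1) ^ (-β) ≤ x ^ (1 - β) - (x + 1) ^ (1 - β) := by
  have hx0 : (0:ℝ) < x := by linarith
  have hx1 : (0:ℝ) < x + 1 := by linarith
  have hA : (0:ℝ) < x ^ β := Real.rpow_pos_of_pos hx0 _
  have hbern : 1 + β / x ≤ (1 + 1/x) ^ β := by
    have h0x : (0:ℝ) ≤ 1/x := by positivity
    have h := one_add_mul_self_le_rpow_one_add (s := 1/x) (by linarith) hβ.le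
    rwa [mul_one_div] at h
  have hfrac : (1 + 1/x) ^ β = (x+1) ^ β / x ^ β := by
    rw [show (1 + 1/x) = (x+1)/x by field_simp, Real.div_rpow (by linarith) hx0.le]
  rw [hfrac] at hbern
  have hkey : (x + β) * x ^ β ≤ x * (x+1) ^ β := by
    have := (le_div_iff₀ hA).1 hbern
    have h2 := mul_le_mul_of_nonneg_left this hx0.le
    calc (x + β) * x ^ β = x * ((1 + β/x) * x ^ β) := by field_simp
      _ ≤ x * (x+1)^β := h2
  have e1 : x ^ (1-β) = x * x ^ (-β) := by
    rw [show (1-β) = 1 + (-β) by ring, Real.rpow_add hx0, Real.rpow_one]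
  have e2 : (x+1) ^ (1-β) = (x+1) * (x+1) ^ (-β) := by
    rw [show (1-β) = 1 + (-β) by ring, Real.rpow_add hx1, Real.rpow_one]
  rw [e1, e2]
  have e3 : x ^ (-β) = (x ^ β)⁻¹ := by rw [Real.rpow_neg hx0.le]
  have e4 : (x+1) ^ (-β) = ((x+1) ^ β)⁻¹ := by rw [Real.rpow_neg hx1.le]
  rw [e3, e4]
  have hBp : (0:ℝ) < (x+1) ^ β := Real.rpow_pos_of_pos hx1 _
  have h5 : (x + β) * ((x+1) ^ β)⁻¹ ≤ x * (x ^ β)⁻¹ := by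
    rw [← div_eq_mul_inv, ← div_eq_mul_inv]
    exact (div_le_div_iff₀ hBp hA).2 hkey
  have h6 : (x + β) * ((x+1) ^ β)⁻¹ = (β - 1) * ((x+1) ^ β)⁻¹ + (x+1) * ((x+1) ^ β)⁻¹ := by
    ring
  linarith

lemma gle {β : ℝ} (hβ : 1 < β) {a : ℝ} (ha : 1 ≤ a) :
    Gfun β a ≤ a ^ (1 - β) / (β - 1) := by
  have hb1 : (0:ℝ) < β - 1 := by linarith
  have hsum : ∀ N : ℕ, ∑ k ∈ Finset.range N, (a + 1 + (k : ℝ)) ^ (-β)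
      ≤ (a ^ (1-β) - (a + N) ^ (1-β)) / (β - 1) := by
    intro N
    induction N with
    | zero => simp
    | succ N ih =>
      rw [Finset.sum_range_succ]
      have hx : (1:ℝ) ≤ a + N := by
        have : (0:ℝ) ≤ (N:ℝ) := Nat.cast_nonneg N
        linarith
      have hstep := bern_step hβ hx
      have h1 : (a + 1 + (N:ℝ)) ^ (-β) ≤ ((a + N) ^ (1-β) - (a + N + 1) ^ (1-β)) / (β - 1) := by
        rw [le_div_iff₀ hb1, show a + 1 + (N:ℝ) = (a + N) + 1 by ring]
        nlinarith [Real.rpow_nonneg (show (0:ℝ) ≤ a + N + 1 by linarith) (-β)]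
      push_cast
      have : ((a:ℝ) + (N + 1)) = a + N + 1 := by ring
      rw [this]
      calc _ ≤ (a ^ (1-β) - (a + N) ^ (1-β)) / (β - 1)
            + ((a + N) ^ (1-β) - (a + N + 1) ^ (1-β)) / (β - 1) := add_le_add ih h1
        _ = (a ^ (1-β) - (a + N + 1) ^ (1-β)) / (β - 1) := by ring
  refine Real.tsum_le_of_sum_range_le (fun k => Real.rpow_nonneg (by positivity) _) fun N => ?_
  refine (hsum N).trans ?_
  have h0 : (0:ℝ) ≤ (a + N) ^ (1-β) := Real.rpow_nonneg (by positivity) _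
  exact div_le_div_of_nonneg_right (by linarith) hb1.le

lemma finite_aux {d k : ℕ} (F : (Fin d → ℕ) → ℝ) :
    {y | ∃ m : Fin d → ℕ, (∀ i, 1 ≤ m i) ∧ (∑ i, m i = k) ∧ y = F m}.Finite := by
  have hsub : {y | ∃ m : Fin d → ℕ, (∀ i, 1 ≤ m i) ∧ (∑ i, m i = k) ∧ y = F m}
      ⊆ F '' (Set.pi Set.univ fun _ : Fin d => Set.Iic k) := by
    rintro y ⟨m, hm1, hm2, rfl⟩
    refine ⟨m, fun i _ => ?_, rfl⟩
    simpa [Set.mem_Iic] using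
      (Finset.single_le_sum (f := m) (fun i _ => Nat.zero_le _) (Finset.mem_univ i)).trans_eq hm2
  exact ((Set.Finite.pi fun _ => Set.finite_Iic k).image F).subset hsub

/-- Lower drift bound `Lφ(n) ≥ |n|^{-β} [d_(|n|) − d̄(|n|)/(β−1)]`; consequently, if
`d_(k) ≥ η d̄(k)` for all large `k` (some `η > 0`), there is `β > 1` with `Lφ(n) ≥ 0`
for all `n` with `|n|` large enough. -/
theorem stmt7 (d : ℕ) (hd : 2 ≤ d)
    (b dth : (Fin d → ℕ) → Fin d → ℝ)
    (hb : ∀ n i, 0 ≤ b n i) (hdth : ∀ n i, 0 ≤ dth n i) :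
    (∀ β : ℝ, 1 < β → ∀ n : Fin d → ℕ, (∀ i, 1 ≤ n i) →
      (∑ i, (n i : ℝ)) ^ (-β) *
          (dund7 b dth (∑ i, n i) - dbar7 dth (∑ i, n i) / (β - 1)) ≤
        bdGen7 b dth (phiFun β) n) ∧
    ((∃ η > (0:ℝ), ∃ K : ℕ, ∀ k ≥ K, η * dbar7 dth k ≤ dund7 b dth k) →
      ∃ β > (1:ℝ), ∃ K : ℕ, ∀ n : Fin d → ℕ, (∀ i, 1 ≤ n i) → K ≤ ∑ i, n i →
        0 ≤ bdGen7 b dth (phiFun β) n) := by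
  have main : ∀ β : ℝ, 1 < β → ∀ n : Fin d → ℕ, (∀ i, 1 ≤ n i) →
      (∑ i, (n i : ℝ)) ^ (-β) *
          (dund7 b dth (∑ i, n i) - dbar7 dth (∑ i, n i) / (β - 1)) ≤
        bdGen7 b dth (phiFun β) n := by
    intro β hβ n hn
    have hβ1 : (0:ℝ) < β - 1 := by linarith
    set c : ℕ := ∑ i, n i with hc_def
    have hc1 : 1 ≤ c :=
      le_trans (hn ⟨0, by omega⟩)
        (Finset.single_le_sum (fun i _ => Nat.zero_le _) (Finset.mem_univ _))
    have hcr : (∑ i, (n i : ℝ)) = (c:ℝ) := by rw [hc_def]; push_cast; rfl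
    have hcpos : (0:ℝ) < (c:ℝ) := by exact_mod_cast hc1
    have hcr1 : (1:ℝ) ≤ (c:ℝ) := by exact_mod_cast hc1
    have hφn : phiFun β n = Gfun β (c:ℝ) := by rw [phiFun, if_pos hn, hcr]; rfl
    have hbirth : ∀ j, phiFun β (fun i => n i + if i = j then 1 else 0)
        = Gfun β ((c:ℝ)+1) := by
      intro j
      rw [phiFun, if_pos (fun i => le_trans (hn i) (Nat.le_add_right _ _))]
      have hs : (∑ i, ((n i + if i = j then 1 else 0 : ℕ) : ℝ)) = (c:ℝ) + 1 := by
        push_cast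
        rw [Finset.sum_add_distrib, Finset.sum_ite_eq', if_pos (Finset.mem_univ j), hcr]
      rw [hs]; rfl
    have hdeath1 : ∀ j, n j = 1 →
        phiFun β (fun i => n i - if i = j then 1 else 0) = 0 := by
      intro j hj
      rw [phiFun, if_neg]
      push_neg
      exact ⟨j, by simp [hj]⟩
    have hdeath2 : ∀ j, n j ≠ 1 →
        phiFun β (fun i => n i - if i = j then 1 else 0) = Gfun β ((c:ℝ)-1) := by
      intro j hj
      have h2 : 2 ≤ n j := by have := hn j; omega
      rw [phiFun, if_pos]
      · have hs : (∑ i, ((n i - if i = j then 1 else 0 : ℕ) : ℝ)) = (c:ℝ) - 1 := by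
          have hterm : ∀ i ∈ Finset.univ, ((n i - if i = j then 1 else 0 : ℕ) : ℝ)
              = (n i : ℝ) - (if i = j then (1:ℝ) else 0) := by
            intro i _
            split_ifs with h
            · rw [Nat.cast_sub (hn i)]
              norm_num
            · simp
          rw [Finset.sum_congr rfl hterm, Finset.sum_sub_distrib, Finset.sum_ite_eq',
            if_pos (Finset.mem_univ j), hcr]
        rw [hs]; rfl
      · intro i
        split_ifs with h
        · rw [h]; omega
        · have := hn i; omega
    have hG1 : Gfun β ((c:ℝ)+1) - Gfun β (c:ℝ) = -(((c:ℝ)+1) ^ (-β)) := by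
      have h := gstep hβ (a := (c:ℝ)) hcpos.le
      linarith
    have hG2 : Gfun β ((c:ℝ)-1) - Gfun β (c:ℝ) = (c:ℝ) ^ (-β) := by
      have h := gstep hβ (a := (c:ℝ)-1) (by linarith)
      rw [show (c:ℝ)-1+1 = (c:ℝ) by ring] at h
      linarith
    have hgle : Gfun β (c:ℝ) ≤ (c:ℝ)^(-β) * (c:ℝ) / (β-1) := by
      have h := gle hβ hcr1
      have e : (c:ℝ)^(1-β) = (c:ℝ)^(-β) * (c:ℝ) := by
        rw [show (1-β) = (-β) + 1 by ring, Real.rpow_add hcpos, Real.rpow_one]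
      rw [e] at h
      exact h
    have hdund : dund7 b dth c ≤ ∑ i, (n i:ℝ) * ((if n i ≠ 1 then dth n i else 0) - b n i) := by
      rw [dund7]
      exact csInf_le (finite_aux (k := c)
        (fun m => ∑ i, (m i : ℝ) * ((if m i ≠ 1 then dth m i else 0) - b m i))).bddBelow
        ⟨n, hn, rfl, rfl⟩
    have hdbar : (c:ℝ) * ∑ i, (if n i = 1 then dth n i else 0) ≤ dbar7 dth c := by
      rw [dbar7]
      exact le_csSup (finite_aux (k := c)
        (fun m => (c:ℝ) * ∑ i, (if m i = 1 then dth m i else 0))).bddAbove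
        ⟨n, hn, rfl, rfl⟩
    have hcbpos : (0:ℝ) < (c:ℝ)^(-β) := Real.rpow_pos_of_pos hcpos _
    have hmono : ((c:ℝ)+1)^(-β) ≤ (c:ℝ)^(-β) :=
      Real.rpow_le_rpow_of_nonpos hcpos (by linarith) (by linarith)
    rw [hcr]
    calc (c:ℝ) ^ (-β) * (dund7 b dth c - dbar7 dth c / (β - 1))
        ≤ (c:ℝ) ^ (-β) * ((∑ i, (n i:ℝ) * ((if n i ≠ 1 then dth n i else 0) - b n i))
            - ((c:ℝ) * ∑ i, (if n i = 1 then dth n i else 0)) / (β - 1)) := by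
          apply mul_le_mul_of_nonneg_left _ hcbpos.le
          exact sub_le_sub hdund (div_le_div_of_nonneg_right hdbar hβ1.le)
      _ = ∑ j, ((c:ℝ)^(-β) * ((n j:ℝ) * ((if n j ≠ 1 then dth n j else 0) - b n j)
            - (c:ℝ) * (if n j = 1 then dth n j else 0) / (β - 1))) := by
          rw [Finset.mul_sum, Finset.sum_div, ← Finset.sum_sub_distrib, Finset.mul_sum]
      _ ≤ ∑ j, (-(((c:ℝ)+1)^(-β)) * (n j : ℝ) * b n j
            + (if n j = 1 then -(Gfun β (c:ℝ)) else (c:ℝ)^(-β)) * (n j : ℝ) * dth n j) := by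
          refine Finset.sum_le_sum fun j _ => ?_
          rcases eq_or_ne (n j) 1 with hj | hj
          · simp only [hj, if_pos rfl, ne_eq, not_true_eq_false, if_false, Nat.cast_one,
              if_true, ite_true, ite_false]
            have p1 := mul_le_mul_of_nonneg_right hmono (hb n j)
            have p2 := mul_le_mul_of_nonneg_right hgle (hdth n j)
            ring_nf at p1 p2 ⊢
            linarith
          · simp only [if_neg hj, ne_eq, hj, not_false_eq_true, if_true, if_false,
              ite_true, ite_false]
            have hnj : (0:ℝ) ≤ (n j:ℝ) := Nat.cast_nonneg _
            have p1 := mul_le_mul_of_nonneg_right hmono (mul_nonneg hnj (hb n j))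
            ring_nf at p1 ⊢
            linarith
      _ = bdGen7 b dth (phiFun β) n := by
          rw [bdGen7, ← Finset.sum_add_distrib]
          refine Finset.sum_congr rfl fun j _ => ?_
          congr 1
          · rw [hbirth j, hφn, hG1]
          · rcases eq_or_ne (n j) 1 with hj | hj
            · rw [hdeath1 j hj, hφn, if_pos hj, zero_sub]
            · rw [hdeath2 j hj, hφn, if_neg hj, hG2]
  refine ⟨main, ?_⟩
  rintro ⟨η, hη, K, hK⟩
  have hη' : (0:ℝ) < 1/η := by positivity
  refine ⟨1 + 1/η, by linarith, K, fun n hn hKn => ?_⟩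
  refine le_trans ?_ (main _ (by linarith) n hn)
  apply mul_nonneg (Real.rpow_nonneg (by positivity) _)
  have h1 : dbar7 dth (∑ i, n i) / (1 + 1/η - 1) = η * dbar7 dth (∑ i, n i) := by
    rw [show (1 + 1/η - 1) = 1/η by ring, div_div_eq_mul_div, div_one]
    ring
  rw [h1, sub_nonneg]
  exact hK _ hKn
end

section
/- Let f:[0,∞)→[0,∞) be absolutely continuous with f(t) ≤ f(0) + At − B∫₀ᵗ f(s)^{1+ε} ds for all t, where A,B,ε>0. Set a = (2A/B)^{1/(1+ε)} and let t₀>0 satisfy (2/(εBt₀))^{1/ε} < a. Then there exists u ∈ [0,t₀] with f(u) < a. -/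
open Set MeasureTheory

/-- Bernoulli-type: `(1+c)^(-(1+ε)) ≥ 1 - (1+ε)c` for `c ≥ 0`, `ε > 0`. -/
lemma bern_neg (ε c : ℝ) (hε : 0 < ε) (hc : 0 ≤ c) :
    1 - (1+ε)*c ≤ (1+c) ^ (-(1+ε) : ℝ) := by
  have h1c : (0:ℝ) < 1 + c := by linarith
  have hs : (-1:ℝ) ≤ -c/(1+c) := by
    rw [neg_div, neg_le_neg_iff, div_le_one h1c]; linarith
  have hp : (1:ℝ) ≤ 1 + ε := by linarith
  have hb := one_add_mul_self_le_rpow_one_add hs hp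
  have he : (1 + -c/(1+c)) = (1+c)⁻¹ := by field_simp; ring
  rw [he, Real.inv_rpow h1c.le, ← Real.rpow_neg h1c.le] at hb
  have hq : c/(1+c) ≤ c := by
    rw [div_le_iff₀ h1c]; nlinarith
  have : 1 - (1+ε)*c ≤ 1 + (1+ε) * (-c/(1+c)) := by
    rw [neg_div]
    nlinarith
  linarith

/-- Per-step gain for the implicit Euler scheme. -/
lemma step_gain (ε : ℝ) (hε : 0 < ε) {x y c : ℝ} (hy : 0 < y) (hc : 0 ≤ c)
    (hxy : y * (1+c) ≤ x) :
    y ^ (-ε) * (ε * c) * (1 - (1+ε)*c) ≤ y ^ (-ε) - x ^ (-ε) := by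
  have h1c : (0:ℝ) < 1 + c := by linarith
  have hA : x ^ (-ε) ≤ (y*(1+c)) ^ (-ε) :=
    Real.rpow_le_rpow_of_nonpos (mul_pos hy h1c) hxy (neg_nonpos.mpr hε.le)
  have hmul : (y*(1+c)) ^ (-ε) = y ^ (-ε) * (1+c) ^ (-ε) := Real.mul_rpow hy.le h1c.le
  have hpos : (0:ℝ) < (1+c) ^ (-(1+ε) : ℝ) := Real.rpow_pos_of_pos h1c _
  have b1 : 1 + (1+ε)*c ≤ (1+c) ^ ((1:ℝ)+ε) :=
    one_add_mul_self_le_rpow_one_add (by linarith) (by linarith)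
  have e1 : (1+c) ^ ((1:ℝ)+ε) * (1+c) ^ (-(1+ε) : ℝ) = 1 := by
    rw [← Real.rpow_add h1c, show (1:ℝ)+ε + -(1+ε) = 0 by ring, Real.rpow_zero]
  have e2 : (1+c) * (1+c) ^ (-(1+ε) : ℝ) = (1+c) ^ (-ε) := by
    nth_rewrite 1 [show (1+c) = (1+c) ^ (1:ℝ) from (Real.rpow_one _).symm]
    rw [← Real.rpow_add h1c]; ring_nf
  have hkey : ε*c*(1+c) ^ (-(1+ε) : ℝ) ≤ 1 - (1+c) ^ (-ε) := by
    nlinarith [mul_le_mul_of_nonneg_right b1 hpos.le]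
  have b2 := bern_neg ε c hε hc
  have hy' : (0:ℝ) < y ^ (-ε) := Real.rpow_pos_of_pos hy _
  calc y ^ (-ε) * (ε * c) * (1 - (1+ε)*c)
      ≤ y ^ (-ε) * (ε * c) * ((1+c) ^ (-(1+ε) : ℝ)) := by
        apply mul_le_mul_of_nonneg_left b2 (by positivity)
    _ = y ^ (-ε) * (ε * c * (1+c) ^ (-(1+ε) : ℝ)) := by ring
    _ ≤ y ^ (-ε) * (1 - (1+c) ^ (-ε)) :=
        mul_le_mul_of_nonneg_left hkey hy'.le
    _ = y ^ (-ε) - y ^ (-ε) * (1+c) ^ (-ε) := by ring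
    _ ≤ y ^ (-ε) - x ^ (-ε) := by rw [← hmul]; linarith

set_option maxHeartbeats 1000000 in
/-- Key quantitative step: if a nonnegative absolutely continuous `f` satisfies
`f(t) ≤ f(s) + A(t−s) − B∫ₛᵗ f^{1+ε}` and `t₀` satisfies `(2/(εBt₀))^{1/ε} < (2A/B)^{1/(1+ε)}`,
then `f(u) < (2A/B)^{1/(1+ε)}` for some `u ∈ [0,t₀]`. -/
theorem stmt10 (A B ε : ℝ) (hA : 0 < A) (hB : 0 < B) (hε : 0 < ε)
    (f : ℝ → ℝ)
    (hf_nonneg : ∀ t ≥ (0:ℝ), 0 ≤ f t)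
    (hf_cont : ContinuousOn f (Ici (0:ℝ)))
    (hineq : ∀ s t : ℝ, 0 ≤ s → s ≤ t →
      f t ≤ f s + A * (t - s) - B * ∫ r in s..t, f r ^ (1 + ε))
    (t₀ : ℝ) (ht₀ : 0 < t₀)
    (ht₀' : (2 / (ε * B * t₀)) ^ (1 / ε) < (2 * A / B) ^ (1 / (1 + ε))) :
    ∃ u ∈ Icc (0:ℝ) t₀, f u < (2 * A / B) ^ (1 / (1 + ε)) := by
  by_contra hcon
  push_neg at hcon
  set a := (2 * A / B) ^ (1 / (1 + ε)) with ha_def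
  have hε1 : (0:ℝ) < 1 + ε := by linarith
  have h2AB : (0:ℝ) < 2 * A / B := by positivity
  have ha_pos : 0 < a := Real.rpow_pos_of_pos h2AB _
  have ha_pow : a ^ (1+ε) = 2 * A / B := by
    rw [ha_def, ← Real.rpow_mul h2AB.le, one_div_mul_cancel hε1.ne', Real.rpow_one]
  -- continuity and integrability of g = f^(1+ε)
  set g : ℝ → ℝ := fun r => f r ^ (1 + ε) with hg_def
  have hg_cont : ContinuousOn g (Ici (0:ℝ)) :=
    hf_cont.rpow_const (fun r _ => Or.inr hε1.le)
  have hint : ∀ s t : ℝ, 0 ≤ s → s ≤ t → IntervalIntegrable g volume s t := by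
    intro s t hs hst
    apply ContinuousOn.intervalIntegrable
    apply hg_cont.mono
    rw [uIcc_of_le hst]
    intro r hr; exact le_trans hs hr.1
  -- lower bound on integrals from pointwise lower bound
  have hIlow : ∀ (s t L : ℝ), 0 ≤ s → s ≤ t → (∀ r ∈ Icc s t, L ≤ g r) →
      L * (t - s) ≤ ∫ r in s..t, g r := by
    intro s t L hs hst hL
    have := intervalIntegral.integral_mono_on hst (intervalIntegrable_const (c := L))
      (hint s t hs hst) hL
    rwa [intervalIntegral.integral_const, smul_eq_mul, mul_comm] at this
  -- Step B: refined inequality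
  have hB2 : ∀ s t : ℝ, 0 ≤ s → s ≤ t → t ≤ t₀ →
      f t ≤ f s - B/2 * ∫ r in s..t, g r := by
    intro s t hs hst ht
    have hL : ∀ r ∈ Icc s t, 2*A/B ≤ g r := by
      intro r hr
      have hra : a ≤ f r := hcon r ⟨le_trans hs hr.1, le_trans hr.2 ht⟩
      calc 2*A/B = a ^ (1+ε) := ha_pow.symm
        _ ≤ f r ^ (1+ε) := Real.rpow_le_rpow ha_pos.le hra hε1.le
    have hI := hIlow s t (2*A/B) hs hst hL
    have h1 := hineq s t hs hst
    have h2 : B * (2*A/B) = 2*A := by field_simp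
    nlinarith [mul_le_mul_of_nonneg_left hI hB.le]
  -- Step C: monotonicity on [0, t₀]
  have hmono : ∀ s t : ℝ, 0 ≤ s → s ≤ t → t ≤ t₀ → f t ≤ f s := by
    intro s t hs hst ht
    have h1 := hB2 s t hs hst ht
    have hL : ∀ r ∈ Icc s t, (0:ℝ) ≤ g r := by
      intro r hr
      exact Real.rpow_nonneg (hf_nonneg r (le_trans hs hr.1)) _
    have hI := hIlow s t 0 hs hst hL
    nlinarith
  -- Step D: discrete step inequality
  have hD : ∀ s t : ℝ, 0 ≤ s → s ≤ t → t ≤ t₀ →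
      f t + B/2 * (t - s) * (f t ^ (1+ε)) ≤ f s := by
    intro s t hs hst ht
    have h1 := hB2 s t hs hst ht
    have hL : ∀ r ∈ Icc s t, f t ^ (1+ε) ≤ g r := by
      intro r hr
      have : f t ≤ f r := hmono r t (le_trans hs hr.1) hr.2 ht
      exact Real.rpow_le_rpow (hf_nonneg t (le_trans hs hst)) this hε1.le
    have hI := hIlow s t (f t ^ (1+ε)) hs hst hL
    nlinarith
  -- positivity facts
  have hf0a : a ≤ f 0 := hcon 0 ⟨le_refl _, ht₀.le⟩
  have hf0pos : 0 < f 0 := lt_of_lt_of_le ha_pos hf0a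
  set M : ℝ := f 0 ^ ε with hM_def
  have hM_pos : 0 < M := Real.rpow_pos_of_pos hf0pos _
  set K : ℝ := ε * (1+ε) * (B/2)^2 * M with hK_def
  have hK_pos : 0 < K := by positivity
  -- Step E: per-step gain in f^(-ε)
  have hE : ∀ s t : ℝ, 0 ≤ s → s ≤ t → t ≤ t₀ →
      ε * (B/2) * (t - s) - K * (t - s)^2 ≤ f t ^ (-ε) - f s ^ (-ε) := by
    intro s t hs hst ht
    have hft_pos : 0 < f t := lt_of_lt_of_le ha_pos (hcon t ⟨le_trans hs hst, ht⟩)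
    set c : ℝ := B/2 * (t - s) * (f t ^ ε) with hc_def
    have hc_nonneg : 0 ≤ c := by
      apply mul_nonneg (mul_nonneg (by positivity) (by linarith)) (Real.rpow_nonneg hft_pos.le _)
    have hxy : f t * (1 + c) ≤ f s := by
      have hpow : f t * (f t ^ ε) = f t ^ (1+ε) := by
        nth_rewrite 1 [show f t = f t ^ (1:ℝ) from (Real.rpow_one _).symm]
        rw [← Real.rpow_add hft_pos]
      have := hD s t hs hst ht
      calc f t * (1 + c) = f t + B/2 * (t - s) * (f t * f t ^ ε) := by ring
        _ = f t + B/2 * (t - s) * (f t ^ (1+ε)) := by rw [hpow]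
        _ ≤ f s := this
    have hsg := step_gain ε hε hft_pos hc_nonneg hxy
    have hyc : f t ^ (-ε) * (ε * c) = ε * (B/2) * (t - s) := by
      have : f t ^ (-ε) * f t ^ ε = 1 := by
        rw [← Real.rpow_add hft_pos, show -ε + ε = 0 by ring, Real.rpow_zero]
      calc f t ^ (-ε) * (ε * c) = ε * (B/2) * (t - s) * (f t ^ (-ε) * f t ^ ε) := by
            rw [hc_def]; ring
        _ = ε * (B/2) * (t - s) := by rw [this]; ring
    have hcM : c ≤ B/2 * (t - s) * M := by
      apply mul_le_mul_of_nonneg_left _ (by nlinarith : (0:ℝ) ≤ B/2 * (t - s))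
      exact Real.rpow_le_rpow hft_pos.le (hmono 0 t le_rfl (hs.trans hst) ht) hε.le
    -- combine
    have hfinal : ε * (B/2) * (t - s) - K * (t - s)^2 ≤
        f t ^ (-ε) * (ε * c) * (1 - (1+ε)*c) := by
      rw [hyc]
      have hd : 0 ≤ t - s := by linarith
      calc ε * (B/2) * (t - s) - K * (t - s)^2
          = ε * (B/2) * (t - s) * (1 - (1+ε) * (B/2 * (t - s) * M)) := by
            rw [hK_def]; ring
        _ ≤ ε * (B/2) * (t - s) * (1 - (1+ε)*c) := by
            apply mul_le_mul_of_nonneg_left _ (by positivity)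
            nlinarith
    linarith
  -- Step F: telescoping over a uniform partition
  have key : ∀ n : ℕ, 0 < n →
      ε * (B/2) * t₀ - K * t₀^2 / n ≤ f t₀ ^ (-ε) - f 0 ^ (-ε) := by
    intro n hn
    have hn' : (0:ℝ) < n := by exact_mod_cast hn
    set δ : ℝ := t₀ / n with hδ_def
    have hδ_pos : 0 < δ := by positivity
    have hnδ : (n:ℝ) * δ = t₀ := by rw [hδ_def]; field_simp
    set φ : ℕ → ℝ := fun k => f (k * δ) ^ (-ε) with hφ_def
    have hsum := Finset.sum_range_sub φ n
    have hterm : ∀ k ∈ Finset.range n, ε * (B/2) * δ - K * δ^2 ≤ φ (k+1) - φ k := by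
      intro k hk
      rw [Finset.mem_range] at hk
      have hk1 : ((k:ℝ)+1) ≤ n := by exact_mod_cast hk
      have hs0 : (0:ℝ) ≤ k * δ := by positivity
      have hst : (k:ℝ) * δ ≤ ((k:ℝ)+1) * δ := by nlinarith
      have htt : ((k:ℝ)+1) * δ ≤ t₀ := by
        rw [← hnδ]; nlinarith
      have := hE (k * δ) (((k:ℝ)+1) * δ) hs0 hst htt
      have hdiff : ((k:ℝ)+1) * δ - k * δ = δ := by ring
      rw [hdiff] at this
      have hcast : ((k+1 : ℕ) : ℝ) = (k:ℝ) + 1 := by push_cast; ring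
      calc ε * (B/2) * δ - K * δ^2 ≤ f (((k:ℝ)+1) * δ) ^ (-ε) - f (k * δ) ^ (-ε) := this
        _ = φ (k+1) - φ k := by rw [hφ_def]; simp only [hcast]
    have hcard := Finset.card_nsmul_le_sum (Finset.range n)
      (fun k => φ (k+1) - φ k) (ε * (B/2) * δ - K * δ^2) hterm
    rw [Finset.card_range, hsum, nsmul_eq_mul] at hcard
    have hφn : φ n = f t₀ ^ (-ε) := by show f (↑n * δ) ^ (-ε) = _; rw [hnδ]
    have hφ0 : φ 0 = f 0 ^ (-ε) := by show f (↑(0:ℕ) * δ) ^ (-ε) = _; norm_num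
    rw [hφn, hφ0] at hcard
    have heq : (n:ℝ) * (ε * (B/2) * δ - K * δ^2) = ε * (B/2) * t₀ - K * t₀^2 / n := by
      rw [hδ_def]; field_simp
    rw [heq] at hcard
    linarith
  -- Step G: pass to the limit n → ∞
  have hf0nn : 0 ≤ f 0 ^ (-ε) := Real.rpow_nonneg hf0pos.le _
  have hlim : ε * (B/2) * t₀ ≤ f t₀ ^ (-ε) := by
    by_contra hcc
    push_neg at hcc
    have hη : 0 < ε * (B/2) * t₀ - f t₀ ^ (-ε) := by linarith
    obtain ⟨n, hn⟩ := exists_nat_gt (K * t₀^2 / (ε * (B/2) * t₀ - f t₀ ^ (-ε)))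
    have hn' : (0:ℝ) < n := lt_of_le_of_lt (by positivity) hn
    have hn0 : 0 < n := by exact_mod_cast hn'
    rw [div_lt_iff₀ hη] at hn
    have h1 := key n hn0
    have h2 : K * t₀^2 / n < ε * (B/2) * t₀ - f t₀ ^ (-ε) := by
      rw [div_lt_iff₀ hn']; linarith
    linarith
  -- conclude: f t₀ ≤ (2/(εBt₀))^(1/ε) < a ≤ f t₀, contradiction
  have hma : a ≤ f t₀ := hcon t₀ ⟨ht₀.le, le_rfl⟩
  have hm_pos : 0 < f t₀ := lt_of_lt_of_le ha_pos hma
  have hmε_pos : 0 < f t₀ ^ ε := Real.rpow_pos_of_pos hm_pos _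
  have hinv : f t₀ ^ (-ε) = (f t₀ ^ ε)⁻¹ := Real.rpow_neg hm_pos.le _
  have h3 : f t₀ ^ ε ≤ 2 / (ε * B * t₀) := by
    have hmm : f t₀ ^ ε * (ε * (B/2) * t₀) ≤ 1 := by
      have := mul_le_mul_of_nonneg_left hlim hmε_pos.le
      rw [hinv, mul_inv_cancel₀ hmε_pos.ne'] at this
      linarith
    rw [le_div_iff₀ (by positivity : (0:ℝ) < ε * B * t₀)]
    nlinarith
  have h4 : f t₀ ≤ (2 / (ε * B * t₀)) ^ (1/ε) := by
    have h5 : (f t₀ ^ ε) ^ ((1:ℝ)/ε) ≤ (2 / (ε * B * t₀)) ^ ((1:ℝ)/ε) :=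
      Real.rpow_le_rpow hmε_pos.le h3 (by positivity)
    rwa [← Real.rpow_mul hm_pos.le, mul_one_div_cancel hε.ne', Real.rpow_one] at h5
  linarith
end

section
/- Let M>0 and for β≥M define C_β = [−2^{−β} + β2^{−β}(a/B−1) − β(β+1)2^{−β−1}(a/B−1)² + 1]/(a−B)⁴ where 0<a<B. Then there exists M>0 such that C_β > 0 for all β ≥ M, and for such β the polynomial P₂(x) = 2^{−β} − (β2^{−β}/B)(x−B) + (β(β+1)2^{−β−1}/B²)(x−B)² + C_β(x−B)⁴ satisfies P₂'(x) ≤ 0 and P₂''(x) ≥ 0 for all x ≤ B, P₂(a)=1, and P₂(x) ≥ 1 for all x ≤ a. -/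
open Real Filter

lemma rpow_two_neg_tendsto (s : ℕ) :
    Tendsto (fun β : ℝ => β ^ s * (2:ℝ) ^ (-β)) atTop (nhds 0) := by
  have h := tendsto_rpow_mul_exp_neg_mul_atTop_nhds_zero (s : ℝ) (Real.log 2)
    (Real.log_pos one_lt_two)
  refine h.congr' ?_
  filter_upwards [eventually_ge_atTop (0:ℝ)] with β hβ
  rw [Real.rpow_natCast, Real.rpow_def_of_pos two_pos]
  ring_nf

/-- The constant `C_β` in the construction of the Lyapunov function `h_β`. -/
noncomputable def Cbeta (a B β : ℝ) : ℝ :=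
  (-(2:ℝ) ^ (-β) + β * (2:ℝ) ^ (-β) * (a / B - 1) -
      β * (β + 1) * (2:ℝ) ^ (-β - 1) * (a / B - 1) ^ 2 + 1) / (a - B) ^ 4

/-- The quartic polynomial `P₂` matching `B^β(2x)^{−β}` to second order at `x = B`. -/
noncomputable def P2 (a B β x : ℝ) : ℝ :=
  (2:ℝ) ^ (-β) - (β * (2:ℝ) ^ (-β) / B) * (x - B) +
    (β * (β + 1) * (2:ℝ) ^ (-β - 1) / B ^ 2) * (x - B) ^ 2 + Cbeta a B β * (x - B) ^ 4

noncomputable def P2d (a B β x : ℝ) : ℝ :=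
  -(β * (2:ℝ) ^ (-β) / B) + (β * (β + 1) * (2:ℝ) ^ (-β - 1) / B ^ 2) * (2 * (x - B)) +
    Cbeta a B β * (4 * (x - B) ^ 3)

noncomputable def P2dd (a B β x : ℝ) : ℝ :=
  (β * (β + 1) * (2:ℝ) ^ (-β - 1) / B ^ 2) * 2 + Cbeta a B β * (12 * (x - B) ^ 2)

lemma hasDerivAt_P2 (a B β x : ℝ) : HasDerivAt (P2 a B β) (P2d a B β x) x := by
  have h : HasDerivAt (fun y : ℝ => y - B) 1 x := (hasDerivAt_id x).sub_const B
  have H := (((hasDerivAt_const x ((2:ℝ) ^ (-β))).sub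
      (h.const_mul (β * (2:ℝ) ^ (-β) / B))).add
      ((h.pow 2).const_mul (β * (β + 1) * (2:ℝ) ^ (-β - 1) / B ^ 2))).add
      ((h.pow 4).const_mul (Cbeta a B β))
  refine H.congr_deriv ?_
  unfold P2d; push_cast; ring

lemma hasDerivAt_P2d (a B β x : ℝ) : HasDerivAt (P2d a B β) (P2dd a B β x) x := by
  have h : HasDerivAt (fun y : ℝ => y - B) 1 x := (hasDerivAt_id x).sub_const B
  have H := (((hasDerivAt_const x (-(β * (2:ℝ) ^ (-β) / B)))).add
      ((h.const_mul 2).const_mul (β * (β + 1) * (2:ℝ) ^ (-β - 1) / B ^ 2))).add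
      (((h.pow 3).const_mul 4).const_mul (Cbeta a B β))
  refine H.congr_deriv ?_
  unfold P2dd; push_cast; ring

lemma deriv_P2 (a B β : ℝ) : deriv (P2 a B β) = P2d a B β :=
  funext fun x => (hasDerivAt_P2 a B β x).deriv

lemma deriv_P2d (a B β : ℝ) : deriv (P2d a B β) = P2dd a B β :=
  funext fun x => (hasDerivAt_P2d a B β x).deriv

/-- Core computation of Lemma 4.3: for `β` large, `C_β > 0`, `P₂` is nonincreasing and convex
on `(-∞, B]`, `P₂(a) = 1`, and `P₂ ≥ 1` on `(-∞, a]`. -/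
theorem stmt13 (a B : ℝ) (ha : 0 < a) (hab : a < B) :
    ∃ M > (0:ℝ), ∀ β ≥ M,
      0 < Cbeta a B β ∧
      (∀ x ≤ B, deriv (P2 a B β) x ≤ 0 ∧ 0 ≤ deriv (deriv (P2 a B β)) x) ∧
      P2 a B β a = 1 ∧
      ∀ x ≤ a, 1 ≤ P2 a B β x := by
  have hB : (0:ℝ) < B := ha.trans hab
  have haB : a - B ≠ 0 := by linarith
  have hden : (0:ℝ) < (a - B) ^ 4 := by positivity
  -- numerator tends to 1
  have hN : Tendsto (fun β : ℝ => -(2:ℝ) ^ (-β) + β * (2:ℝ) ^ (-β) * (a / B - 1) -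
      β * (β + 1) * (2:ℝ) ^ (-β - 1) * (a / B - 1) ^ 2 + 1) atTop (nhds 1) := by
    have h0 := rpow_two_neg_tendsto 0
    have h1 := rpow_two_neg_tendsto 1
    have h2 := rpow_two_neg_tendsto 2
    have key : Tendsto (fun β : ℝ => -(β^0 * (2:ℝ)^(-β)) + (β^1 * (2:ℝ)^(-β)) * (a/B - 1) -
        (β^2 * (2:ℝ)^(-β) + β^1 * (2:ℝ)^(-β)) * (2:ℝ)^(-(1:ℝ)) * (a/B - 1)^2 + 1) atTop
        (nhds (-(0:ℝ) + 0 * (a/B-1) - (0 + 0) * (2:ℝ)^(-(1:ℝ)) * (a/B-1)^2 + 1)) := by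
      exact (((h0.neg.add (h1.mul_const _)).sub
        (((h2.add h1).mul_const _).mul_const _)).add tendsto_const_nhds)
    have : (-(0:ℝ) + 0 * (a/B-1) - (0 + 0) * (2:ℝ)^(-(1:ℝ)) * (a/B-1)^2 + 1) = 1 := by ring
    rw [this] at key
    refine key.congr fun β => ?_
    have h21 : (2:ℝ) ^ (-β - 1) = (2:ℝ) ^ (-β) * (2:ℝ) ^ (-(1:ℝ)) := by
      rw [← Real.rpow_add two_pos]; ring_nf
    rw [h21]; ring
  have hev : ∀ᶠ β in atTop, 0 < -(2:ℝ) ^ (-β) + β * (2:ℝ) ^ (-β) * (a / B - 1) -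
      β * (β + 1) * (2:ℝ) ^ (-β - 1) * (a / B - 1) ^ 2 + 1 :=
    hN.eventually (eventually_gt_nhds one_pos)
  obtain ⟨M₀, hM₀⟩ := eventually_atTop.mp hev
  refine ⟨max M₀ 1, lt_of_lt_of_le one_pos (le_max_right _ _), fun β hβ => ?_⟩
  have hβ0 : (0:ℝ) < β := lt_of_lt_of_le one_pos ((le_max_right _ _).trans hβ)
  have hC : 0 < Cbeta a B β :=
    div_pos (hM₀ β ((le_max_left _ _).trans hβ)) hden
  have h2b : (0:ℝ) < (2:ℝ) ^ (-β) := Real.rpow_pos_of_pos two_pos _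
  have h2b1 : (0:ℝ) < (2:ℝ) ^ (-β - 1) := Real.rpow_pos_of_pos two_pos _
  have hderiv : ∀ x ≤ B, deriv (P2 a B β) x ≤ 0 ∧ 0 ≤ deriv (deriv (P2 a B β)) x := by
    intro x hx
    rw [deriv_P2, deriv_P2d]
    constructor
    · unfold P2d
      have t1 : β * (2:ℝ) ^ (-β) / B > 0 := by positivity
      have t2 : (β * (β + 1) * (2:ℝ) ^ (-β - 1) / B ^ 2) * (2 * (x - B)) ≤ 0 := by
        apply mul_nonpos_of_nonneg_of_nonpos
        · positivity
        · nlinarith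
      have t3 : Cbeta a B β * (4 * (x - B) ^ 3) ≤ 0 := by
        apply mul_nonpos_of_nonneg_of_nonpos hC.le
        nlinarith [pow_nonneg (by linarith : (0:ℝ) ≤ B - x) 3]
      nlinarith
    · unfold P2dd
      have t2 : 0 ≤ Cbeta a B β * (12 * (x - B) ^ 2) := by positivity
      have t1 : 0 ≤ (β * (β + 1) * (2:ℝ) ^ (-β - 1) / B ^ 2) * 2 := by positivity
      linarith
  have hPa : P2 a B β a = 1 := by
    unfold P2 Cbeta
    rw [div_mul_cancel₀ _ (by positivity : ((a - B) ^ 4 : ℝ) ≠ 0)]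
    field_simp
    ring
  refine ⟨hC, hderiv, hPa, fun x hx => ?_⟩
  have hanti : AntitoneOn (P2 a B β) (Set.Iic B) := by
    apply antitoneOn_of_deriv_nonpos (convex_Iic B)
    · have hd : Differentiable ℝ (P2 a B β) := fun y => (hasDerivAt_P2 a B β y).differentiableAt
      exact hd.continuous.continuousOn
    · intro y _
      exact (hasDerivAt_P2 a B β y).differentiableAt.differentiableWithinAt
    · intro y hy
      exact (hderiv y (le_of_lt (by simpa using hy))).1
  have := hanti (Set.mem_Iic.mpr (le_of_lt (lt_of_le_of_lt hx hab)))
    (Set.mem_Iic.mpr hab.le) hx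
  rw [hPa] at this
  exact this
end

section
/- There exists M>0 such that for all β ≥ M there is a function h_β:[0,∞)→[0,∞), twice continuously differentiable on (0,∞), with h_β(x)=4x²/a² for x∈[0,a/2], h_β(x)=B^β(2x)^{−β} for x≥B, h_β ≥ 1 on [a/2,a], h_β nonincreasing and convex on [a,∞), and sup_{β≥M} sup_{x∈[a/2,a]}|h_β'(x)| < ∞, sup_{β≥M} sup_{x∈[a/2,a]}|h_β''(x)| < ∞. -/
open Set

open Filter Topology

namespace Stmt14Aux
noncomputable section

def mm (a B : ℝ) : ℝ := (max a (B/2) + B)/2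
def tv (a B : ℝ) : ℝ := mm a B - a
def AA (a B : ℝ) : ℝ := 2/((tv a B)^2*a) + 1/(tv a B)^3
def FF (a B β : ℝ) : ℝ := (B/(2*mm a B))^β
def EE (a B β : ℝ) : ℝ := β * FF a B β / mm a B
def DD (a B β : ℝ) : ℝ := β*(β+1)*FF a B β/(2*(mm a B)^2)
def pp (a B β x : ℝ) : ℝ := FF a B β + EE a B β*(mm a B-x) + DD a B β*(mm a B-x)^2 + AA a B*(mm a B-x)^3
def pp' (a B β x : ℝ) : ℝ := -(EE a B β + 2*DD a B β*(mm a B-x) + 3*AA a B*(mm a B-x)^2)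
def pp'' (a B β x : ℝ) : ℝ := 2*DD a B β + 6*AA a B*(mm a B-x)
def vv (a B β : ℝ) : ℝ := pp a B β a
def P1 (a B β : ℝ) : ℝ := pp' a B β a
def P2 (a B β : ℝ) : ℝ := pp'' a B β a
def c0 (a B β : ℝ) : ℝ := (vv a B β - 1)/(a/2)^3
def c4 (a B β : ℝ) : ℝ := (3*(c0 a B β)*(a/2)^2 - P1 a B β)/(a/2)^3
def c5 (a B β : ℝ) : ℝ :=
  (P2 a B β - 2*(a/2)*(16/a^3) - 2*(a/2)^2*(80/a^4) + 6*(a/2)^2*(c4 a B β) - 6*(a/2)*(c0 a B β))/(2*(a/2)^3)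
def rr (a B β x : ℝ) : ℝ :=
  (16/a^3)*(x-a/2)*(a-x)^2 + (80/a^4)*(x-a/2)^2*(a-x)^2 + c4 a B β*(x-a/2)^3*(a-x)
    + c5 a B β*(x-a/2)^3*(a-x)^2 + c0 a B β*(x-a/2)^3
def rr' (a B β x : ℝ) : ℝ :=
  (16/a^3)*((a-x)^2 - 2*(x-a/2)*(a-x)) + (80/a^4)*(2*(x-a/2)*(a-x)^2 - 2*(x-a/2)^2*(a-x))
    + c4 a B β*(3*(x-a/2)^2*(a-x) - (x-a/2)^3)
    + c5 a B β*(3*(x-a/2)^2*(a-x)^2 - 2*(x-a/2)^3*(a-x)) + c0 a B β*(3*(x-a/2)^2)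
def rr'' (a B β x : ℝ) : ℝ :=
  (16/a^3)*(-4*(a-x)+2*(x-a/2)) + (80/a^4)*(2*(a-x)^2 - 8*(x-a/2)*(a-x) + 2*(x-a/2)^2)
    + c4 a B β*(6*(x-a/2)*(a-x) - 6*(x-a/2)^2)
    + c5 a B β*(6*(x-a/2)*(a-x)^2 - 12*(x-a/2)^2*(a-x) + 2*(x-a/2)^3) + c0 a B β*(6*(x-a/2))
def TT (B β x : ℝ) : ℝ := B^β * (2*x)^(-β)
def TT' (B β x : ℝ) : ℝ := B^β * ((-β) * (2*x)^(-β-1) * 2)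
def TT'' (B β x : ℝ) : ℝ := B^β * ((-β) * ((-β-1) * (2*x)^(-β-1-1) * 2) * 2)
def hh (a B β x : ℝ) : ℝ :=
  if x ≤ a/2 then 4*x^2/a^2 else if x ≤ a then 1 + rr a B β x else if x ≤ mm a B then pp a B β x else TT B β x
def hh1 (a B β x : ℝ) : ℝ :=
  if x ≤ a/2 then 8*x/a^2 else if x ≤ a then rr' a B β x else if x ≤ mm a B then pp' a B β x else TT' B β x
def hh2 (a B β x : ℝ) : ℝ :=
  if x ≤ a/2 then 8/a^2 else if x ≤ a then rr'' a B β x else if x ≤ mm a B then pp'' a B β x else TT'' B β x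

variable {a B β : ℝ}

-- basic position facts
lemma a_lt_m (ha : 0 < a) (hab : a < B) : a < mm a B := by
  have h1 := le_max_left a (B/2); unfold mm; nlinarith
lemma m_lt_B (ha : 0 < a) (hab : a < B) : mm a B < B := by
  have h1 : max a (B/2) < B := max_lt hab (by nlinarith)
  unfold mm; nlinarith
lemma m_pos (ha : 0 < a) (hab : a < B) : 0 < mm a B := lt_trans ha (a_lt_m ha hab)
lemma B_lt_2m (ha : 0 < a) (hab : a < B) : B < 2 * mm a B := by
  have h1 := le_max_right a (B/2); unfold mm; nlinarith
lemma tv_pos (ha : 0 < a) (hab : a < B) : 0 < tv a B := sub_pos.mpr (a_lt_m ha hab)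
lemma AA_pos (ha : 0 < a) (hab : a < B) : 0 < AA a B := by
  have h1 := tv_pos ha hab; unfold AA
  have h2 : 0 < (tv a B)^2*a := by positivity
  have h3 : 0 < (tv a B)^3 := by positivity
  exact add_pos (div_pos two_pos h2) (div_pos one_pos h3)
lemma r0_pos (ha : 0 < a) (hab : a < B) : 0 < B/(2*mm a B) := by
  have h1 := m_pos ha hab; have hB : (0:ℝ) < B := lt_trans ha hab; positivity
lemma r0_lt_one (ha : 0 < a) (hab : a < B) : B/(2*mm a B) < 1 := by
  have h1 := B_lt_2m ha hab; have h2 := m_pos ha hab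
  rw [div_lt_one (by linarith)]; linarith
lemma FF_pos (ha : 0 < a) (hab : a < B) : 0 < FF a B β :=
  Real.rpow_pos_of_pos (r0_pos ha hab) β
lemma EE_nonneg (ha : 0 < a) (hab : a < B) (hβ : 0 ≤ β) : 0 ≤ EE a B β := by
  have h1 := FF_pos (β := β) ha hab; have h2 := m_pos ha hab; unfold EE; positivity
lemma DD_nonneg (ha : 0 < a) (hab : a < B) (hβ : 0 ≤ β) : 0 ≤ DD a B β := by
  have h1 := FF_pos (β := β) ha hab; have h2 := m_pos ha hab; unfold DD; positivity

-- junction identities at a/2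
lemma rr_at_half (ha : 0 < a) : rr a B β (a/2) = 0 := by unfold rr; ring
lemma rr'_at_half (ha : 0 < a) : rr' a B β (a/2) = 8*(a/2)/a^2 := by
  unfold rr'; field_simp; ring
lemma rr''_at_half (ha : 0 < a) : rr'' a B β (a/2) = 8/a^2 := by
  unfold rr''; field_simp; ring

-- junction identities at a
lemma rr_at_a (ha : 0 < a) : 1 + rr a B β a = pp a B β a := by
  unfold rr c0 vv; field_simp; ring
lemma rr'_at_a (ha : 0 < a) : rr' a B β a = pp' a B β a := by
  unfold rr' c4 P1; field_simp; ring
lemma rr''_at_a (ha : 0 < a) : rr'' a B β a = pp'' a B β a := by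
  unfold rr'' c5 c4 P2 P1; field_simp; ring

-- junction identities at m
lemma X_eq (ha : 0 < a) (hab : a < B) : FF a B β = B^β * (2*mm a B)^(-β) := by
  have hB : (0:ℝ) < B := lt_trans ha hab
  have hm : (0:ℝ) < mm a B := m_pos ha hab
  unfold FF
  rw [Real.div_rpow hB.le (by positivity), Real.rpow_neg (by positivity), div_eq_mul_inv]
lemma pp_at_m (ha : 0 < a) (hab : a < B) : pp a B β (mm a B) = TT B β (mm a B) := by
  unfold pp TT; rw [X_eq (β := β) ha hab]; ring
lemma rpow_step (ha : 0 < a) (hab : a < B) (q : ℝ) :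
    (2*mm a B)^(q-1) = (2*mm a B)^q * (2*mm a B)⁻¹ := by
  have hm : (0:ℝ) < mm a B := m_pos ha hab
  rw [show q-1 = q + (-1) by ring, Real.rpow_add (by positivity), Real.rpow_neg_one]
lemma pp'_at_m (ha : 0 < a) (hab : a < B) : pp' a B β (mm a B) = TT' B β (mm a B) := by
  have hm : (0:ℝ) < mm a B := m_pos ha hab
  unfold pp' TT' EE
  rw [show -β-1 = -β - 1 by ring, rpow_step ha hab (-β), X_eq (β := β) ha hab]
  field_simp; ring
lemma pp''_at_m (ha : 0 < a) (hab : a < B) : pp'' a B β (mm a B) = TT'' B β (mm a B) := by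
  have hm : (0:ℝ) < mm a B := m_pos ha hab
  unfold pp'' TT'' DD
  rw [show -β-1-1 = (-β-1) - 1 by ring, rpow_step ha hab (-β-1),
    show -β-1 = -β - 1 by ring, rpow_step ha hab (-β), X_eq (β := β) ha hab]
  field_simp; ring

-- gluing helpers
lemma hasDerivAt_if {f g : ℝ → ℝ} {j d : ℝ} (hf : HasDerivAt f d j) (hg : HasDerivAt g d j)
    (he : f j = g j) :
    HasDerivAt (fun x => if x ≤ j then f x else g x) d j := by
  rw [hasDerivAt_iff_tendsto_slope] at hf hg ⊢
  have key : ∀ x : ℝ, slope (fun y => if y ≤ j then f y else g y) j x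
      = if x ≤ j then slope f j x else slope g j x := by
    intro x; by_cases hx : x ≤ j <;> simp [slope_def_field, hx, he]
  rw [tendsto_def] at hf hg ⊢
  intro s hs
  filter_upwards [hf s hs, hg s hs] with x h1 h2
  rw [Set.mem_preimage, key x]
  split_ifs
  · exact h1
  · exact h2

lemma continuousAt_if {f g : ℝ → ℝ} {j : ℝ} (hf : ContinuousAt f j) (hg : ContinuousAt g j)
    (he : f j = g j) :
    ContinuousAt (fun x => if x ≤ j then f x else g x) j := by
  unfold ContinuousAt at *
  rw [tendsto_def] at hf hg ⊢
  intro s hs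
  simp only [le_refl, if_true] at hs
  filter_upwards [hf s hs, hg s (he ▸ hs)] with x h1 h2
  rw [Set.mem_preimage]
  split_ifs
  · exact h1
  · exact h2

-- branch derivatives
lemma hasDerivAt_parab (x : ℝ) : HasDerivAt (fun y : ℝ => 4*y^2/a^2) (8*x/a^2) x := by
  have h := ((hasDerivAt_pow 2 x).const_mul (4:ℝ)).div_const (a^2)
  exact h.congr_deriv (by push_cast; ring)

lemma hasDerivAt_parab' (x : ℝ) : HasDerivAt (fun y : ℝ => 8*y/a^2) (8/a^2) x := by
  have h := ((hasDerivAt_id x).const_mul (8:ℝ)).div_const (a^2)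
  exact h.congr_deriv (by ring)

lemma hasDerivAt_onePlusRr (x : ℝ) :
    HasDerivAt (fun y => 1 + rr a B β y) (rr' a B β x) x := by
  have hu : HasDerivAt (fun y : ℝ => y - a/2) 1 x := (hasDerivAt_id x).sub_const _
  have hw : HasDerivAt (fun y : ℝ => a - y) (-1) x := (hasDerivAt_id x).const_sub a
  have t1 := (hu.const_mul (16/a^3)).mul (hw.pow 2)
  have t2 := ((hu.pow 2).const_mul (80/a^4)).mul (hw.pow 2)
  have t4 := ((hu.pow 3).const_mul (c4 a B β)).mul hw
  have t5 := ((hu.pow 3).const_mul (c5 a B β)).mul (hw.pow 2)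
  have t0 := (hu.pow 3).const_mul (c0 a B β)
  have hsum := ((((t1.add t2).add t4).add t5).add t0).const_add 1
  unfold rr rr'
  exact hsum.congr_deriv (by simp only [Pi.pow_apply]; push_cast; ring)

lemma hasDerivAt_rr' (x : ℝ) :
    HasDerivAt (rr' a B β) (rr'' a B β x) x := by
  have hu : HasDerivAt (fun y : ℝ => y - a/2) 1 x := (hasDerivAt_id x).sub_const _
  have hw : HasDerivAt (fun y : ℝ => a - y) (-1) x := (hasDerivAt_id x).const_sub a
  have t1 := ((hw.pow 2).sub ((hu.const_mul 2).mul hw)).const_mul (16/a^3)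
  have t2 := (((hu.const_mul 2).mul (hw.pow 2)).sub (((hu.pow 2).const_mul 2).mul hw)).const_mul (80/a^4)
  have t4 := ((((hu.pow 2).const_mul 3).mul hw).sub (hu.pow 3)).const_mul (c4 a B β)
  have t5 := ((((hu.pow 2).const_mul 3).mul (hw.pow 2)).sub (((hu.pow 3).const_mul 2).mul hw)).const_mul (c5 a B β)
  have t0 := ((hu.pow 2).const_mul 3).const_mul (c0 a B β)
  have hsum := (((t1.add t2).add t4).add t5).add t0
  unfold rr' rr''
  exact hsum.congr_deriv (by simp only [Pi.pow_apply]; push_cast; ring)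

lemma hasDerivAt_pp (x : ℝ) : HasDerivAt (pp a B β) (pp' a B β x) x := by
  have hv : HasDerivAt (fun y : ℝ => mm a B - y) (-1) x := (hasDerivAt_id x).const_sub _
  have hsum := (((hasDerivAt_const x (FF a B β)).add (hv.const_mul (EE a B β))).add
    ((hv.pow 2).const_mul (DD a B β))).add ((hv.pow 3).const_mul (AA a B))
  unfold pp pp'
  exact hsum.congr_deriv (by push_cast; ring)

lemma hasDerivAt_pp' (x : ℝ) : HasDerivAt (pp' a B β) (pp'' a B β x) x := by
  have hv : HasDerivAt (fun y : ℝ => mm a B - y) (-1) x := (hasDerivAt_id x).const_sub _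
  have hsum := (((hasDerivAt_const x (EE a B β)).add (hv.const_mul (2*DD a B β))).add
    ((hv.pow 2).const_mul (3*AA a B))).neg
  unfold pp' pp''
  exact hsum.congr_deriv (by push_cast; ring)

lemma hasDerivAt_TT {x : ℝ} (hx : 0 < x) : HasDerivAt (TT B β) (TT' B β x) x := by
  have h2x : HasDerivAt (fun y : ℝ => 2*y) 2 x := by
    simpa using (hasDerivAt_id x).const_mul (2:ℝ)
  have hr : HasDerivAt (fun y : ℝ => y^(-β)) ((-β) * (2*x)^(-β-1)) (2*x) :=
    Real.hasDerivAt_rpow_const (Or.inl (by positivity))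
  have hc := HasDerivAt.comp x hr h2x
  simp only [Function.comp_def] at hc
  have := hc.const_mul (B^β)
  unfold TT TT'
  convert this using 1

lemma hasDerivAt_TT' {x : ℝ} (hx : 0 < x) : HasDerivAt (TT' B β) (TT'' B β x) x := by
  have h2x : HasDerivAt (fun y : ℝ => 2*y) 2 x := by
    simpa using (hasDerivAt_id x).const_mul (2:ℝ)
  have hr : HasDerivAt (fun y : ℝ => y^(-β-1)) ((-β-1) * (2*x)^(-β-1-1)) (2*x) :=
    Real.hasDerivAt_rpow_const (Or.inl (by positivity))
  have hc := HasDerivAt.comp x hr h2x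
  simp only [Function.comp_def] at hc
  have := ((hc.const_mul (-β)).mul_const 2).const_mul (B^β)
  unfold TT' TT''
  convert this using 1

lemma half_lt_a (ha : 0 < a) : a/2 < a := by linarith

lemma hh_hasDeriv (ha : 0 < a) (hab : a < B) (x : ℝ) :
    HasDerivAt (hh a B β) (hh1 a B β x) x := by
  have ham := a_lt_m ha hab
  have hm0 := m_pos ha hab
  rcases lt_trichotomy x (a/2) with h | h | h
  · have hev : hh a B β =ᶠ[𝓝 x] (fun y : ℝ => 4*y^2/a^2) := by
      filter_upwards [Iio_mem_nhds h] with y hy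
      simp only [hh, if_pos (le_of_lt (mem_Iio.mp hy))]
    rw [show hh1 a B β x = 8*x/a^2 by simp only [hh1, if_pos h.le]]
    exact (hasDerivAt_parab x).congr_of_eventuallyEq hev
  · rw [h]
    have hev : hh a B β =ᶠ[𝓝 (a/2)]
        (fun y : ℝ => if y ≤ a/2 then 4*y^2/a^2 else 1 + rr a B β y) := by
      filter_upwards [Iio_mem_nhds (half_lt_a ha)] with y hy
      by_cases h2 : y ≤ a/2
      · simp only [hh, if_pos h2]
      · simp only [hh, if_neg h2, if_pos (mem_Iio.mp hy).le]
    have hval : 4*(a/2)^2/a^2 = 1 + rr a B β (a/2) := by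
      rw [rr_at_half ha]; field_simp; ring
    have hg : HasDerivAt (fun y => 1 + rr a B β y) (8*(a/2)/a^2) (a/2) := by
      have := hasDerivAt_onePlusRr (a := a) (B := B) (β := β) (a/2)
      rwa [rr'_at_half ha] at this
    have hj := hasDerivAt_if (hasDerivAt_parab (a := a) (a/2)) hg hval
    rw [show hh1 a B β (a/2) = 8*(a/2)/a^2 by simp only [hh1, if_pos le_rfl]]
    exact hj.congr_of_eventuallyEq hev
  · rcases lt_trichotomy x a with h2 | h2 | h2
    · have hev : hh a B β =ᶠ[𝓝 x] (fun y => 1 + rr a B β y) := by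
        filter_upwards [Ioo_mem_nhds h h2] with y hy
        simp only [hh, if_neg (not_le.mpr hy.1), if_pos hy.2.le]
      rw [show hh1 a B β x = rr' a B β x by
        simp only [hh1, if_neg (not_le.mpr h), if_pos h2.le]]
      exact (hasDerivAt_onePlusRr x).congr_of_eventuallyEq hev
    · rw [h2]
      have hev : hh a B β =ᶠ[𝓝 a]
          (fun y : ℝ => if y ≤ a then 1 + rr a B β y else pp a B β y) := by
        filter_upwards [Ioo_mem_nhds (half_lt_a ha) ham] with y hy
        by_cases h3 : y ≤ a
        · simp only [hh, if_neg (not_le.mpr hy.1), if_pos h3]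
        · simp only [hh, if_neg (not_le.mpr hy.1), if_neg h3, if_pos hy.2.le]
      have hval : 1 + rr a B β a = pp a B β a := rr_at_a ha
      have hg : HasDerivAt (pp a B β) (rr' a B β a) a := by
        have := hasDerivAt_pp (a := a) (B := B) (β := β) a
        rwa [← rr'_at_a ha] at this
      have hj := hasDerivAt_if (hasDerivAt_onePlusRr a) hg hval
      rw [show hh1 a B β a = rr' a B β a by
        simp only [hh1, if_neg (not_le.mpr (half_lt_a ha)), if_pos le_rfl]]
      exact hj.congr_of_eventuallyEq hev
    · rcases lt_trichotomy x (mm a B) with h3 | h3 | h3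
      · have hev : hh a B β =ᶠ[𝓝 x] (pp a B β) := by
          filter_upwards [Ioo_mem_nhds h2 h3] with y hy
          simp only [hh, if_neg (not_le.mpr (lt_trans (half_lt_a ha) hy.1)),
            if_neg (not_le.mpr hy.1), if_pos hy.2.le]
        rw [show hh1 a B β x = pp' a B β x by
          simp only [hh1, if_neg (not_le.mpr h), if_neg (not_le.mpr h2), if_pos h3.le]]
        exact (hasDerivAt_pp x).congr_of_eventuallyEq hev
      · rw [h3]
        have hev : hh a B β =ᶠ[𝓝 (mm a B)]
            (fun y : ℝ => if y ≤ mm a B then pp a B β y else TT B β y) := by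
          filter_upwards [Ioi_mem_nhds ham] with y hy
          by_cases h4 : y ≤ mm a B
          · simp only [hh, if_neg (not_le.mpr (lt_trans (half_lt_a ha) (mem_Ioi.mp hy))),
              if_neg (not_le.mpr (mem_Ioi.mp hy)), if_pos h4]
          · simp only [hh, if_neg (not_le.mpr (lt_trans (half_lt_a ha) (mem_Ioi.mp hy))),
              if_neg (not_le.mpr (mem_Ioi.mp hy)), if_neg h4]
        have hval : pp a B β (mm a B) = TT B β (mm a B) := pp_at_m ha hab
        have hg : HasDerivAt (TT B β) (pp' a B β (mm a B)) (mm a B) := by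
          have := hasDerivAt_TT (B := B) (β := β) hm0
          rwa [← pp'_at_m ha hab] at this
        have hj := hasDerivAt_if (hasDerivAt_pp (mm a B)) hg hval
        rw [show hh1 a B β (mm a B) = pp' a B β (mm a B) by
          simp only [hh1, if_neg (not_le.mpr (lt_trans (half_lt_a ha) ham)), if_neg (not_le.mpr ham), if_pos le_rfl]]
        exact hj.congr_of_eventuallyEq hev
      · have hev : hh a B β =ᶠ[𝓝 x] (TT B β) := by
          filter_upwards [Ioi_mem_nhds h3] with y hy
          simp only [hh, if_neg (not_le.mpr (lt_trans (half_lt_a ha) (lt_trans ham (mem_Ioi.mp hy)))),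
            if_neg (not_le.mpr (lt_trans ham (mem_Ioi.mp hy))), if_neg (not_le.mpr (mem_Ioi.mp hy))]
        rw [show hh1 a B β x = TT' B β x by
          simp only [hh1, if_neg (not_le.mpr h), if_neg (not_le.mpr h2), if_neg (not_le.mpr h3)]]
        exact (hasDerivAt_TT (lt_trans hm0 h3)).congr_of_eventuallyEq hev

lemma hh1_hasDeriv (ha : 0 < a) (hab : a < B) (x : ℝ) :
    HasDerivAt (hh1 a B β) (hh2 a B β x) x := by
  have ham := a_lt_m ha hab
  have hm0 := m_pos ha hab
  rcases lt_trichotomy x (a/2) with h | h | h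
  · have hev : hh1 a B β =ᶠ[𝓝 x] (fun y : ℝ => 8*y/a^2) := by
      filter_upwards [Iio_mem_nhds h] with y hy
      simp only [hh1, if_pos (le_of_lt (mem_Iio.mp hy))]
    rw [show hh2 a B β x = 8/a^2 by simp only [hh2, if_pos h.le]]
    exact (hasDerivAt_parab' x).congr_of_eventuallyEq hev
  · rw [h]
    have hev : hh1 a B β =ᶠ[𝓝 (a/2)]
        (fun y : ℝ => if y ≤ a/2 then 8*y/a^2 else rr' a B β y) := by
      filter_upwards [Iio_mem_nhds (half_lt_a ha)] with y hy
      by_cases h2 : y ≤ a/2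
      · simp only [hh1, if_pos h2]
      · simp only [hh1, if_neg h2, if_pos (mem_Iio.mp hy).le]
    have hval : 8*(a/2)/a^2 = rr' a B β (a/2) := (rr'_at_half ha).symm
    have hg : HasDerivAt (rr' a B β) (8/a^2) (a/2) := by
      have := hasDerivAt_rr' (a := a) (B := B) (β := β) (a/2)
      rwa [rr''_at_half ha] at this
    have hj := hasDerivAt_if (hasDerivAt_parab' (a := a) (a/2)) hg hval
    rw [show hh2 a B β (a/2) = 8/a^2 by simp only [hh2, if_pos le_rfl]]
    exact hj.congr_of_eventuallyEq hev
  · rcases lt_trichotomy x a with h2 | h2 | h2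
    · have hev : hh1 a B β =ᶠ[𝓝 x] (rr' a B β) := by
        filter_upwards [Ioo_mem_nhds h h2] with y hy
        simp only [hh1, if_neg (not_le.mpr hy.1), if_pos hy.2.le]
      rw [show hh2 a B β x = rr'' a B β x by
        simp only [hh2, if_neg (not_le.mpr h), if_pos h2.le]]
      exact (hasDerivAt_rr' x).congr_of_eventuallyEq hev
    · rw [h2]
      have hev : hh1 a B β =ᶠ[𝓝 a]
          (fun y : ℝ => if y ≤ a then rr' a B β y else pp' a B β y) := by
        filter_upwards [Ioo_mem_nhds (half_lt_a ha) ham] with y hy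
        by_cases h3 : y ≤ a
        · simp only [hh1, if_neg (not_le.mpr hy.1), if_pos h3]
        · simp only [hh1, if_neg (not_le.mpr hy.1), if_neg h3, if_pos hy.2.le]
      have hval : rr' a B β a = pp' a B β a := rr'_at_a ha
      have hg : HasDerivAt (pp' a B β) (rr'' a B β a) a := by
        have := hasDerivAt_pp' (a := a) (B := B) (β := β) a
        rwa [← rr''_at_a ha] at this
      have hj := hasDerivAt_if (hasDerivAt_rr' a) hg hval
      rw [show hh2 a B β a = rr'' a B β a by
        simp only [hh2, if_neg (not_le.mpr (half_lt_a ha)), if_pos le_rfl]]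
      exact hj.congr_of_eventuallyEq hev
    · rcases lt_trichotomy x (mm a B) with h3 | h3 | h3
      · have hev : hh1 a B β =ᶠ[𝓝 x] (pp' a B β) := by
          filter_upwards [Ioo_mem_nhds h2 h3] with y hy
          simp only [hh1, if_neg (not_le.mpr (lt_trans (half_lt_a ha) hy.1)),
            if_neg (not_le.mpr hy.1), if_pos hy.2.le]
        rw [show hh2 a B β x = pp'' a B β x by
          simp only [hh2, if_neg (not_le.mpr h), if_neg (not_le.mpr h2), if_pos h3.le]]
        exact (hasDerivAt_pp' x).congr_of_eventuallyEq hev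
      · rw [h3]
        have hev : hh1 a B β =ᶠ[𝓝 (mm a B)]
            (fun y : ℝ => if y ≤ mm a B then pp' a B β y else TT' B β y) := by
          filter_upwards [Ioi_mem_nhds ham] with y hy
          by_cases h4 : y ≤ mm a B
          · simp only [hh1, if_neg (not_le.mpr (lt_trans (half_lt_a ha) (mem_Ioi.mp hy))),
              if_neg (not_le.mpr (mem_Ioi.mp hy)), if_pos h4]
          · simp only [hh1, if_neg (not_le.mpr (lt_trans (half_lt_a ha) (mem_Ioi.mp hy))),
              if_neg (not_le.mpr (mem_Ioi.mp hy)), if_neg h4]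
        have hval : pp' a B β (mm a B) = TT' B β (mm a B) := pp'_at_m ha hab
        have hg : HasDerivAt (TT' B β) (pp'' a B β (mm a B)) (mm a B) := by
          have := hasDerivAt_TT' (B := B) (β := β) hm0
          rwa [← pp''_at_m ha hab] at this
        have hj := hasDerivAt_if (hasDerivAt_pp' (mm a B)) hg hval
        rw [show hh2 a B β (mm a B) = pp'' a B β (mm a B) by
          simp only [hh2, if_neg (not_le.mpr (lt_trans (half_lt_a ha) ham)), if_neg (not_le.mpr ham), if_pos le_rfl]]
        exact hj.congr_of_eventuallyEq hev
      · have hev : hh1 a B β =ᶠ[𝓝 x] (TT' B β) := by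
          filter_upwards [Ioi_mem_nhds h3] with y hy
          simp only [hh1, if_neg (not_le.mpr (lt_trans (half_lt_a ha) (lt_trans ham (mem_Ioi.mp hy)))),
            if_neg (not_le.mpr (lt_trans ham (mem_Ioi.mp hy))), if_neg (not_le.mpr (mem_Ioi.mp hy))]
        rw [show hh2 a B β x = TT'' B β x by
          simp only [hh2, if_neg (not_le.mpr h), if_neg (not_le.mpr h2), if_neg (not_le.mpr h3)]]
        exact (hasDerivAt_TT' (lt_trans hm0 h3)).congr_of_eventuallyEq hev

lemma deriv_hh (ha : 0 < a) (hab : a < B) : deriv (hh a B β) = hh1 a B β :=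
  funext fun x => (hh_hasDeriv ha hab x).deriv

lemma deriv_hh1 (ha : 0 < a) (hab : a < B) : deriv (hh1 a B β) = hh2 a B β :=
  funext fun x => (hh1_hasDeriv ha hab x).deriv

lemma continuous_rr'' : Continuous (rr'' a B β) := by unfold rr''; fun_prop
lemma continuous_pp'' : Continuous (pp'' a B β) := by unfold pp''; fun_prop

lemma continuousAt_TT'' {x : ℝ} (hx : 0 < x) : ContinuousAt (TT'' B β) x := by
  have h0 : ContinuousAt (fun y : ℝ => (2*y)^(-β-1-1)) x := by
    exact (continuousAt_const.mul continuousAt_id).rpow_const (Or.inl (by show 2*x ≠ 0; positivity))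
  unfold TT''
  exact ((((h0.const_mul (-β-1)).mul_const 2).const_mul (-β)).mul_const 2).const_mul (B^β)

lemma continuous_hh2 (ha : 0 < a) (hab : a < B) : Continuous (hh2 a B β) := by
  have ham := a_lt_m ha hab
  have hm0 := m_pos ha hab
  rw [continuous_iff_continuousAt]
  intro x
  rcases lt_trichotomy x (a/2) with h | h | h
  · refine (continuousAt_const : ContinuousAt (fun _ : ℝ => 8/a^2) x).congr ?_
    filter_upwards [Iio_mem_nhds h] with y hy
    simp only [hh2, if_pos (le_of_lt (mem_Iio.mp hy))]
  · rw [h]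
    have hj := continuousAt_if (f := fun _ : ℝ => 8/a^2) (g := rr'' a B β) (j := a/2)
      continuousAt_const ((continuous_rr'' (a:=a) (B:=B) (β:=β)).continuousAt) (rr''_at_half ha).symm
    refine hj.congr ?_
    filter_upwards [Iio_mem_nhds (half_lt_a ha)] with y hy
    by_cases h2 : y ≤ a/2
    · simp only [hh2, if_pos h2]
    · simp only [hh2, if_neg h2, if_pos (mem_Iio.mp hy).le]
  · rcases lt_trichotomy x a with h2 | h2 | h2
    · refine (continuous_rr'' (a:=a) (B:=B) (β:=β)).continuousAt.congr ?_
      filter_upwards [Ioo_mem_nhds h h2] with y hy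
      simp only [hh2, if_neg (not_le.mpr hy.1), if_pos hy.2.le]
    · rw [h2]
      have hj := continuousAt_if (f := rr'' a B β) (g := pp'' a B β) (j := a)
        (continuous_rr'' (a:=a) (B:=B) (β:=β)).continuousAt (continuous_pp'' (a:=a) (B:=B) (β:=β)).continuousAt (rr''_at_a ha)
      refine hj.congr ?_
      filter_upwards [Ioo_mem_nhds (half_lt_a ha) ham] with y hy
      by_cases h3 : y ≤ a
      · simp only [hh2, if_neg (not_le.mpr hy.1), if_pos h3]
      · simp only [hh2, if_neg (not_le.mpr hy.1), if_neg h3, if_pos hy.2.le]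
    · rcases lt_trichotomy x (mm a B) with h3 | h3 | h3
      · refine (continuous_pp'' (a:=a) (B:=B) (β:=β)).continuousAt.congr ?_
        filter_upwards [Ioo_mem_nhds h2 h3] with y hy
        simp only [hh2, if_neg (not_le.mpr (lt_trans (half_lt_a ha) hy.1)),
          if_neg (not_le.mpr hy.1), if_pos hy.2.le]
      · rw [h3]
        have hj := continuousAt_if (f := pp'' a B β) (g := TT'' B β) (j := mm a B)
          (continuous_pp'' (a:=a) (B:=B) (β:=β)).continuousAt (continuousAt_TT'' hm0) (pp''_at_m ha hab)
        refine hj.congr ?_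
        filter_upwards [Ioi_mem_nhds ham] with y hy
        by_cases h4 : y ≤ mm a B
        · simp only [hh2, if_neg (not_le.mpr (lt_trans (half_lt_a ha) (mem_Ioi.mp hy))),
            if_neg (not_le.mpr (mem_Ioi.mp hy)), if_pos h4]
        · simp only [hh2, if_neg (not_le.mpr (lt_trans (half_lt_a ha) (mem_Ioi.mp hy))),
            if_neg (not_le.mpr (mem_Ioi.mp hy)), if_neg h4]
      · refine (continuousAt_TT'' (B:=B) (β:=β) (lt_trans hm0 h3)).congr ?_
        filter_upwards [Ioi_mem_nhds h3] with y hy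
        simp only [hh2, if_neg (not_le.mpr (lt_trans (half_lt_a ha) (lt_trans ham (mem_Ioi.mp hy)))),
          if_neg (not_le.mpr (lt_trans ham (mem_Ioi.mp hy))), if_neg (not_le.mpr (mem_Ioi.mp hy))]

lemma contDiff_hh (ha : 0 < a) (hab : a < B) : ContDiff ℝ 2 (hh a B β) := by
  rw [show (2 : WithTop ℕ∞) = 1 + 1 by norm_num, contDiff_succ_iff_deriv]
  refine ⟨fun x => (hh_hasDeriv ha hab x).differentiableAt, by simp, ?_⟩
  rw [deriv_hh ha hab, show (1 : WithTop ℕ∞) = 0 + 1 by norm_num, contDiff_succ_iff_deriv]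
  refine ⟨fun x => (hh1_hasDeriv ha hab x).differentiableAt, by simp, ?_⟩
  rw [deriv_hh1 ha hab]
  exact contDiff_zero.mpr (continuous_hh2 ha hab)

lemma htv : mm a B - a = tv a B := rfl

lemma AAt2 (ha : 0 < a) (hab : a < B) : AA a B * (tv a B)^2 = 2/a + 1/(tv a B) := by
  have ht := tv_pos ha hab
  unfold AA; field_simp

lemma AAt3 (ha : 0 < a) (hab : a < B) : AA a B * (tv a B)^3 = 2*(tv a B)/a + 1 := by
  have ht := tv_pos ha hab
  unfold AA; field_simp

lemma vv_eq : vv a B β = FF a B β + EE a B β*(tv a B) + DD a B β*(tv a B)^2 + AA a B*(tv a B)^3 := by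
  unfold vv pp; rw [htv]

lemma vv_ge_one (ha : 0 < a) (hab : a < B) (hβ : 0 ≤ β) : 1 ≤ vv a B β := by
  have hF := (FF_pos (β := β) ha hab).le
  have hE := EE_nonneg ha hab hβ
  have hD := DD_nonneg ha hab hβ
  have ht := tv_pos ha hab
  have h3 := AAt3 (a := a) (B := B) ha hab
  rw [vv_eq]
  have h4 : 0 ≤ 2*(tv a B)/a := by positivity
  nlinarith [mul_nonneg hE ht.le, mul_nonneg hD (sq_nonneg (tv a B))]

lemma c0_nonneg (ha : 0 < a) (hab : a < B) (hβ : 0 ≤ β) : 0 ≤ c0 a B β :=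
  div_nonneg (by linarith [vv_ge_one ha hab hβ]) (by positivity)

lemma P1_eq : P1 a B β = -(EE a B β + 2*DD a B β*(tv a B) + 3*AA a B*(tv a B)^2) := by
  unfold P1 pp'; rw [htv]

lemma P2_eq : P2 a B β = 2*DD a B β + 6*AA a B*(tv a B) := by
  unfold P2 pp''; rw [htv]

lemma P1_nonpos (ha : 0 < a) (hab : a < B) (hβ : 0 ≤ β) : P1 a B β ≤ 0 := by
  have hE := EE_nonneg ha hab hβ
  have hD := DD_nonneg ha hab hβ
  have ht := tv_pos ha hab
  have hA := AA_pos ha hab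
  rw [P1_eq]
  nlinarith [mul_nonneg hD ht.le, mul_nonneg hA.le (sq_nonneg (tv a B))]

lemma P2_nonneg (ha : 0 < a) (hab : a < B) (hβ : 0 ≤ β) : 0 ≤ P2 a B β := by
  have hD := DD_nonneg ha hab hβ
  have ht := tv_pos ha hab
  have hA := AA_pos ha hab
  rw [P2_eq]
  nlinarith [mul_nonneg hA.le ht.le]

lemma c4_nonneg (ha : 0 < a) (hab : a < B) (hβ : 0 ≤ β) : 0 ≤ c4 a B β := by
  apply div_nonneg _ (by positivity)
  have h1 := c0_nonneg ha hab hβ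
  have h2 := P1_nonpos ha hab hβ
  nlinarith [mul_nonneg h1 (sq_nonneg (a/2))]

lemma P1_le_mul (ha : 0 < a) (hab : a < B) (hβ : 0 ≤ β) :
    6*(tv a B) + 3*a ≤ -(P1 a B β) * (a * tv a B) := by
  have hE := EE_nonneg ha hab hβ
  have hD := DD_nonneg ha hab hβ
  have ht := tv_pos ha hab
  have h3 : AA a B * (tv a B)^3 * a = 2*(tv a B) + a := by
    unfold AA; field_simp
  rw [P1_eq]
  nlinarith [mul_nonneg hE (mul_nonneg ha.le ht.le),
    mul_nonneg hD (mul_nonneg ha.le (sq_nonneg (tv a B)))]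

lemma c5_nonneg (ha : 0 < a) (hab : a < B) (hβ : 0 ≤ β) : 0 ≤ c5 a B β := by
  have ht := tv_pos ha hab
  have hc0 := c0_nonneg ha hab hβ
  have hP2 := P2_nonneg ha hab hβ
  have hP1m := P1_le_mul ha hab hβ
  have key : 6*(a/2)^2*(c4 a B β) = 18*(a/2)*(c0 a B β) - 12*(P1 a B β)/a := by
    unfold c4; field_simp; ring
  unfold c5
  apply div_nonneg _ (by positivity)
  rw [key]
  have Neq : P2 a B β - 2*(a/2)*(16/a^3) - 2*(a/2)^2*(80/a^4)
      + (18*(a/2)*(c0 a B β) - 12*(P1 a B β)/a) - 6*(a/2)*(c0 a B β)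
      = P2 a B β + 6*(a*(c0 a B β)) - 12*(P1 a B β)/a - 56/a^2 := by
    field_simp; ring
  rw [Neq]
  have hNa : 0 ≤ (P2 a B β + 6*(a*(c0 a B β)) - 12*(P1 a B β)/a - 56/a^2) * (a^2 * tv a B) := by
    have expand : (P2 a B β + 6*(a*(c0 a B β)) - 12*(P1 a B β)/a - 56/a^2) * (a^2 * tv a B)
        = P2 a B β*a^2*(tv a B) + 6*(a^3*(c0 a B β)*(tv a B))
          + 12*((-(P1 a B β))*(a*(tv a B))) - 56*(tv a B) := by
      field_simp; ring
    rw [expand]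
    nlinarith [mul_nonneg (mul_nonneg hP2 (sq_nonneg a)) ht.le,
      mul_nonneg (mul_nonneg (pow_nonneg ha.le 3) hc0) ht.le]
  exact (mul_nonneg_iff_of_pos_right (by positivity)).mp hNa

lemma rr_nonneg (ha : 0 < a) (hab : a < B) (hβ : 0 ≤ β) {x : ℝ}
    (hx1 : a/2 ≤ x) (hx2 : x ≤ a) : 0 ≤ rr a B β x := by
  have h4 := c4_nonneg ha hab hβ
  have h5 := c5_nonneg ha hab hβ
  have h0 := c0_nonneg ha hab hβ
  have hu : (0:ℝ) ≤ x - a/2 := by linarith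
  have hw : (0:ℝ) ≤ a - x := by linarith
  unfold rr
  have T1 : (0:ℝ) ≤ (16/a^3)*(x-a/2)*(a-x)^2 :=
    mul_nonneg (mul_nonneg (by positivity) hu) (by positivity)
  have T2 : (0:ℝ) ≤ (80/a^4)*(x-a/2)^2*(a-x)^2 :=
    mul_nonneg (by positivity) (by positivity)
  have T4 : (0:ℝ) ≤ c4 a B β*(x-a/2)^3*(a-x) :=
    mul_nonneg (mul_nonneg h4 (pow_nonneg hu 3)) hw
  have T5 : (0:ℝ) ≤ c5 a B β*(x-a/2)^3*(a-x)^2 :=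
    mul_nonneg (mul_nonneg h5 (pow_nonneg hu 3)) (by positivity)
  have T0 : (0:ℝ) ≤ c0 a B β*(x-a/2)^3 := mul_nonneg h0 (pow_nonneg hu 3)
  linarith

lemma pp_nonneg (ha : 0 < a) (hab : a < B) (hβ : 0 ≤ β) {x : ℝ}
    (hx : x ≤ mm a B) : 0 ≤ pp a B β x := by
  have hF := (FF_pos (β := β) ha hab).le
  have hE := EE_nonneg ha hab hβ
  have hD := DD_nonneg ha hab hβ
  have hA := AA_pos ha hab
  have hw : (0:ℝ) ≤ mm a B - x := by linarith
  unfold pp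
  have T1 : (0:ℝ) ≤ EE a B β*(mm a B-x) := mul_nonneg hE hw
  have T2 : (0:ℝ) ≤ DD a B β*(mm a B-x)^2 := mul_nonneg hD (by positivity)
  have T3 : (0:ℝ) ≤ AA a B*(mm a B-x)^3 := mul_nonneg hA.le (pow_nonneg hw 3)
  linarith

lemma TT_pos (ha : 0 < a) (hab : a < B) {x : ℝ} (hx : 0 < x) : 0 < TT B β x := by
  have hB : (0:ℝ) < B := lt_trans ha hab
  unfold TT
  positivity

lemma pp'_nonpos (ha : 0 < a) (hab : a < B) (hβ : 0 ≤ β) {x : ℝ}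
    (hx : x ≤ mm a B) : pp' a B β x ≤ 0 := by
  have hE := EE_nonneg ha hab hβ
  have hD := DD_nonneg ha hab hβ
  have hA := AA_pos ha hab
  have hw : (0:ℝ) ≤ mm a B - x := by linarith
  unfold pp'
  nlinarith [mul_nonneg hD hw, mul_nonneg hA.le (sq_nonneg (mm a B - x))]

lemma pp'_mono (ha : 0 < a) (hab : a < B) (hβ : 0 ≤ β) {x y : ℝ}
    (hxy : x ≤ y) (hy : y ≤ mm a B) : pp' a B β x ≤ pp' a B β y := by
  have hD := DD_nonneg ha hab hβ
  have hA := AA_pos ha hab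
  have hw : (0:ℝ) ≤ mm a B - y := by linarith
  unfold pp'
  nlinarith [mul_nonneg hD (sub_nonneg.mpr hxy),
    mul_nonneg hA.le (mul_nonneg (sub_nonneg.mpr hxy) (by linarith : (0:ℝ) ≤ (mm a B - x) + (mm a B - y)))]

lemma TT'_nonpos (ha : 0 < a) (hab : a < B) (hβ : 0 ≤ β) {x : ℝ} (hx : 0 < x) :
    TT' B β x ≤ 0 := by
  have hB : (0:ℝ) < B := lt_trans ha hab
  have h1 : (0:ℝ) < B^β := Real.rpow_pos_of_pos hB β
  have h2 : (0:ℝ) < (2*x)^(-β-1) := Real.rpow_pos_of_pos (by positivity) _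
  unfold TT'
  nlinarith [mul_pos h1 h2, mul_nonneg hβ (mul_pos h1 h2).le]

lemma TT'_mono (ha : 0 < a) (hab : a < B) (hβ : 0 ≤ β) {u v : ℝ}
    (hu : 0 < u) (huv : u ≤ v) : TT' B β u ≤ TT' B β v := by
  have hB : (0:ℝ) < B := lt_trans ha hab
  have h1 : (0:ℝ) < B^β := Real.rpow_pos_of_pos hB β
  have e1 : (2*u)^(-β-1) = ((2*u)^(β+1))⁻¹ := by
    rw [show -β-1 = -(β+1) by ring, Real.rpow_neg (by positivity)]
  have e2 : (2*v)^(-β-1) = ((2*v)^(β+1))⁻¹ := by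
    rw [show -β-1 = -(β+1) by ring, Real.rpow_neg (by linarith : (0:ℝ) ≤ 2*v)]
  have hbase : (2*u)^(β+1) ≤ (2*v)^(β+1) :=
    Real.rpow_le_rpow (by positivity) (by linarith) (by linarith)
  have hpos : (0:ℝ) < (2*u)^(β+1) := Real.rpow_pos_of_pos (by positivity) _
  have hinv : ((2*v)^(β+1))⁻¹ ≤ ((2*u)^(β+1))⁻¹ := by
    apply inv_anti₀ hpos hbase
  unfold TT'
  rw [e1, e2]
  nlinarith [mul_nonneg (mul_nonneg hβ h1.le) (sub_nonneg.mpr hinv)]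

lemma hh1_nonpos_on (ha : 0 < a) (hab : a < B) (hβ : 0 ≤ β) {x : ℝ} (hx : a < x) :
    hh1 a B β x ≤ 0 := by
  have hm0 := m_pos ha hab
  rw [show hh1 a B β x = if x ≤ mm a B then pp' a B β x else TT' B β x by
    simp only [hh1, if_neg (not_le.mpr (lt_trans (half_lt_a ha) hx)), if_neg (not_le.mpr hx)]]
  split_ifs with h4
  · exact pp'_nonpos ha hab hβ h4
  · exact TT'_nonpos ha hab hβ (lt_trans hm0 (not_le.mp h4))

lemma hh1_mono_on (ha : 0 < a) (hab : a < B) (hβ : 0 ≤ β) :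
    MonotoneOn (hh1 a B β) (Ioi a) := by
  have hm0 := m_pos ha hab
  have ham := a_lt_m ha hab
  intro x hx y hy hxy
  rw [show hh1 a B β x = if x ≤ mm a B then pp' a B β x else TT' B β x by
    simp only [hh1, if_neg (not_le.mpr (lt_trans (half_lt_a ha) (mem_Ioi.mp hx))),
      if_neg (not_le.mpr (mem_Ioi.mp hx))]]
  rw [show hh1 a B β y = if y ≤ mm a B then pp' a B β y else TT' B β y by
    simp only [hh1, if_neg (not_le.mpr (lt_trans (half_lt_a ha) (mem_Ioi.mp hy))),
      if_neg (not_le.mpr (mem_Ioi.mp hy))]]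
  split_ifs with h1 h2 h2
  · exact pp'_mono ha hab hβ hxy h2
  · calc pp' a B β x ≤ pp' a B β (mm a B) := pp'_mono ha hab hβ h1 le_rfl
      _ = TT' B β (mm a B) := pp'_at_m ha hab
      _ ≤ TT' B β y := TT'_mono ha hab hβ hm0 (not_le.mp h2).le
  · exact absurd h2 (not_le.mpr (lt_of_lt_of_le (not_le.mp h1) hxy))
  · exact TT'_mono ha hab hβ (lt_trans hm0 (not_le.mp h1)) hxy

lemma hh_antitone (ha : 0 < a) (hab : a < B) (hβ : 0 ≤ β) :
    AntitoneOn (hh a B β) (Ici a) := by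
  apply antitoneOn_of_deriv_nonpos (convex_Ici a)
  · exact (contDiff_hh ha hab).continuous.continuousOn
  · intro x _
    exact ((hh_hasDeriv ha hab x).differentiableAt).differentiableWithinAt
  · intro x hx
    rw [interior_Ici] at hx
    rw [deriv_hh ha hab]
    exact hh1_nonpos_on ha hab hβ (mem_Ioi.mp hx)

lemma hh_convex (ha : 0 < a) (hab : a < B) (hβ : 0 ≤ β) :
    ConvexOn ℝ (Ici a) (hh a B β) := by
  apply MonotoneOn.convexOn_of_deriv (convex_Ici a)
  · exact (contDiff_hh ha hab).continuous.continuousOn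
  · intro x _
    exact ((hh_hasDeriv ha hab x).differentiableAt).differentiableWithinAt
  · rw [interior_Ici, deriv_hh ha hab]
    exact hh1_mono_on ha hab hβ

lemma exists_K (ha : 0 < a) (hab : a < B) : ∃ K : ℝ, 0 ≤ K ∧ ∀ β : ℝ, 1 ≤ β →
    FF a B β ≤ K ∧ EE a B β ≤ K ∧ DD a B β ≤ K := by
  have hr0 := r0_pos ha hab
  have hr1 := r0_lt_one ha hab
  have hm0 := m_pos ha hab
  have hc : 0 < -Real.log (B/(2*mm a B)) := by
    rw [neg_pos]; exact Real.log_neg hr0 hr1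
  set c := -Real.log (B/(2*mm a B)) with hcdef
  refine ⟨1 + 27/c^3 + 27/c^3/(mm a B) + 27/c^3/(mm a B)^2, by positivity, ?_⟩
  intro β hβ
  have hβ0 : (0:ℝ) < β := lt_of_lt_of_le one_pos hβ
  have hFe : FF a B β = Real.exp (-(c*β)) := by
    unfold FF
    rw [Real.rpow_def_of_pos hr0]
    congr 1
    have h : Real.log (B/(2*mm a B)) = -c := by rw [hcdef]; ring
    rw [h]; ring
  have hexp : (c*β)^3/27 ≤ Real.exp (c*β) := by
    have h3 : c*β/3 + 1 ≤ Real.exp (c*β/3) := Real.add_one_le_exp _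
    have hcb : (0:ℝ) ≤ c*β/3 := by positivity
    calc (c*β)^3/27 = (c*β/3)^3 := by ring
      _ ≤ (Real.exp (c*β/3))^3 := pow_le_pow_left₀ hcb (by linarith) 3
      _ = Real.exp (c*β) := by
          rw [← Real.exp_nat_mul]
          congr 1; push_cast; ring
  have hFle : Real.exp (-(c*β)) ≤ 27/(c*β)^3 := by
    rw [Real.exp_neg, show (27:ℝ)/(c*β)^3 = ((c*β)^3/27)⁻¹ by rw [inv_div]]
    exact inv_anti₀ (by positivity) hexp
  have hpos1 : (0:ℝ) ≤ 27/c^3 := by positivity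
  have hpos2 : (0:ℝ) ≤ 27/c^3/(mm a B) := by positivity
  have hpos3 : (0:ℝ) ≤ 27/c^3/(mm a B)^2 := by positivity
  refine ⟨?_, ?_, ?_⟩
  · have h1 : FF a B β ≤ 1 := Real.rpow_le_one hr0.le hr1.le (by linarith)
    linarith
  · have h1 : β * FF a B β ≤ 27/c^3 := by
      rw [hFe]
      calc β * Real.exp (-(c*β)) ≤ β * (27/(c*β)^3) :=
            mul_le_mul_of_nonneg_left hFle hβ0.le
        _ = 27/(c^3*β^2) := by field_simp
        _ ≤ 27/c^3 := by
            rw [div_le_div_iff₀ (by positivity) (by positivity)]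
            have hb2 : (1:ℝ) ≤ β^2 := by nlinarith
            nlinarith [mul_le_mul_of_nonneg_left hb2 (pow_pos hc 3).le]
    have h2 : EE a B β ≤ 27/c^3/(mm a B) := by
      unfold EE
      exact (div_le_div_iff_of_pos_right hm0).mpr h1
    linarith
  · have h1 : β*(β+1) * FF a B β ≤ 2*(27/c^3) := by
      rw [hFe]
      have step : β*(β+1) ≤ 2*β^2 := by nlinarith
      calc β*(β+1) * Real.exp (-(c*β)) ≤ 2*β^2 * (27/(c*β)^3) :=
            mul_le_mul step hFle (Real.exp_pos _).le (by positivity)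
        _ = 54/(c^3*β) := by field_simp; ring
        _ ≤ 2*(27/c^3) := by
            rw [show 2*((27:ℝ)/c^3) = 54/c^3 by ring,
              div_le_div_iff₀ (by positivity) (by positivity)]
            nlinarith [pow_pos hc 3]
    have h2 : DD a B β ≤ 27/c^3/(mm a B)^2 := by
      unfold DD
      have h3 : (β*(β+1)*FF a B β)/(2*(mm a B)^2) ≤ (2*(27/c^3))/(2*(mm a B)^2) :=
        (div_le_div_iff_of_pos_right (by positivity)).mpr h1
      have h4 : (2*(27/c^3))/(2*(mm a B)^2) = 27/c^3/(mm a B)^2 := by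
        field_simp
      linarith
    linarith

set_option maxHeartbeats 1000000 in
lemma c_bounds (ha : 0 < a) (hab : a < B) : ∃ C0 C4 C5 : ℝ, 0 ≤ C0 ∧ 0 ≤ C4 ∧ 0 ≤ C5 ∧
    ∀ β : ℝ, 1 ≤ β → c0 a B β ≤ C0 ∧ c4 a B β ≤ C4 ∧ c5 a B β ≤ C5 := by
  obtain ⟨K, hK0, hK⟩ := exists_K ha hab
  have ht := tv_pos ha hab
  have hA := AA_pos ha hab
  refine ⟨(K*(1+tv a B+(tv a B)^2) + AA a B*(tv a B)^3)*(8/a^3),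
    (3*((K*(1+tv a B+(tv a B)^2) + AA a B*(tv a B)^3)*(8/a^3))*(a/2)^2
      + (K*(1+2*tv a B) + 3*(AA a B)*(tv a B)^2))*(8/a^3),
    (2*K + 6*(AA a B)*(tv a B)
      + 6*(a/2)^2*((3*((K*(1+tv a B+(tv a B)^2) + AA a B*(tv a B)^3)*(8/a^3))*(a/2)^2
      + (K*(1+2*tv a B) + 3*(AA a B)*(tv a B)^2))*(8/a^3)))*(4/a^3), ?_, ?_, ?_, ?_⟩
  · positivity
  · positivity
  · positivity
  intro β hβ
  obtain ⟨hFK, hEK, hDK⟩ := hK β hβ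
  have hβ0 : (0:ℝ) ≤ β := by linarith
  have hE := EE_nonneg ha hab hβ0
  have hD := DD_nonneg ha hab hβ0
  have hF := (FF_pos (β := β) ha hab).le
  have hc00 := c0_nonneg ha hab hβ0
  have hnum : vv a B β - 1 ≤ K*(1+tv a B+(tv a B)^2) + AA a B*(tv a B)^3 := by
    rw [vv_eq]
    nlinarith [mul_le_mul_of_nonneg_right hEK ht.le,
      mul_le_mul_of_nonneg_right hDK (sq_nonneg (tv a B))]
  have hc0C : c0 a B β ≤ (K*(1+tv a B+(tv a B)^2) + AA a B*(tv a B)^3)*(8/a^3) := by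
    rw [show c0 a B β = (vv a B β - 1)*(8/a^3) by
      unfold c0; rw [div_eq_mul_inv, show ((a:ℝ)/2)^3 = a^3/8 by ring, inv_div]]
    exact mul_le_mul_of_nonneg_right hnum (by positivity)
  have hmP1 : -(P1 a B β) ≤ K*(1+2*tv a B) + 3*(AA a B)*(tv a B)^2 := by
    rw [P1_eq]
    nlinarith [mul_le_mul_of_nonneg_right hDK ht.le]
  have hc4C : c4 a B β ≤ (3*((K*(1+tv a B+(tv a B)^2) + AA a B*(tv a B)^3)*(8/a^3))*(a/2)^2
      + (K*(1+2*tv a B) + 3*(AA a B)*(tv a B)^2))*(8/a^3) := by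
    rw [show c4 a B β = (3*(c0 a B β)*(a/2)^2 - P1 a B β)*(8/a^3) by
      unfold c4; rw [div_eq_mul_inv, show ((a:ℝ)/2)^3 = a^3/8 by ring, inv_div]]
    apply mul_le_mul_of_nonneg_right _ (by positivity)
    nlinarith [mul_le_mul_of_nonneg_right hc0C (by positivity : (0:ℝ) ≤ (a/2)^2)]
  refine ⟨hc0C, hc4C, ?_⟩
  have hP2le : P2 a B β ≤ 2*K + 6*(AA a B)*(tv a B) := by
    rw [P2_eq]; nlinarith
  rw [show c5 a B β = (P2 a B β - 2*(a/2)*(16/a^3) - 2*(a/2)^2*(80/a^4)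
      + 6*(a/2)^2*(c4 a B β) - 6*(a/2)*(c0 a B β))*(4/a^3) by
    unfold c5; rw [div_eq_mul_inv, show 2*((a:ℝ)/2)^3 = a^3/4 by ring, inv_div]]
  apply mul_le_mul_of_nonneg_right _ (by positivity)
  nlinarith [mul_le_mul_of_nonneg_left hc4C (by positivity : (0:ℝ) ≤ 6*(a/2)^2),
    mul_nonneg (by positivity : (0:ℝ) ≤ 6*(a/2)) hc00,
    (by positivity : (0:ℝ) ≤ 2*(a/2)*(16/a^3)),
    (by positivity : (0:ℝ) ≤ 2*(a/2)^2*(80/a^4))]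

set_option maxHeartbeats 1000000 in
lemma deriv_bounds (ha : 0 < a) (hab : a < B) : ∃ M1 M2 : ℝ, ∀ β : ℝ, 1 ≤ β →
    ∀ x ∈ Icc (a/2) a, |hh1 a B β x| ≤ M1 ∧ |hh2 a B β x| ≤ M2 := by
  obtain ⟨C0, C4, C5, hC0, hC4, hC5, hc⟩ := c_bounds ha hab
  refine ⟨(16/a^3)*(3*(a/2)^2) + (80/a^4)*(4*(a/2)^3) + C4*(4*(a/2)^3)
      + C5*(5*(a/2)^4) + C0*(3*(a/2)^2),
    (16/a^3)*(6*(a/2)) + (80/a^4)*(12*(a/2)^2) + C4*(12*(a/2)^2)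
      + C5*(20*(a/2)^3) + C0*(6*(a/2)), ?_⟩
  intro β hβ x hx
  obtain ⟨hc0, hc4, hc5⟩ := hc β hβ
  have hβ0 : (0:ℝ) ≤ β := by linarith
  have h40 := c4_nonneg ha hab hβ0
  have h50 := c5_nonneg ha hab hβ0
  have h00 := c0_nonneg ha hab hβ0
  have hu0 : (0:ℝ) ≤ x - a/2 := by linarith [hx.1]
  have huL : x - a/2 ≤ a/2 := by linarith [hx.2]
  have hw0 : (0:ℝ) ≤ a - x := by linarith [hx.2]
  have hwL : a - x ≤ a/2 := by linarith [hx.1]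
  have hL0 : (0:ℝ) ≤ a/2 := by linarith
  -- monomial bounds
  have bw1 : a - x ≤ a/2 := hwL
  have bu1 : x - a/2 ≤ a/2 := huL
  have bw2 : (a-x)^2 ≤ (a/2)^2 := pow_le_pow_left₀ hw0 hwL 2
  have bu2 : (x-a/2)^2 ≤ (a/2)^2 := pow_le_pow_left₀ hu0 huL 2
  have bu3 : (x-a/2)^3 ≤ (a/2)^3 := pow_le_pow_left₀ hu0 huL 3
  have buw : (x-a/2)*(a-x) ≤ (a/2)^2 := by
    rw [show ((a:ℝ)/2)^2 = (a/2)*(a/2) by ring]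
    exact mul_le_mul huL hwL hw0 hL0
  have buw2 : (x-a/2)*(a-x)^2 ≤ (a/2)^3 := by
    rw [show ((a:ℝ)/2)^3 = (a/2)*(a/2)^2 by ring]
    exact mul_le_mul huL bw2 (by positivity) hL0
  have bu2w : (x-a/2)^2*(a-x) ≤ (a/2)^3 := by
    rw [show ((a:ℝ)/2)^3 = (a/2)^2*(a/2) by ring]
    exact mul_le_mul bu2 hwL hw0 (by positivity)
  have bu2w2 : (x-a/2)^2*(a-x)^2 ≤ (a/2)^4 := by
    rw [show ((a:ℝ)/2)^4 = (a/2)^2*(a/2)^2 by ring]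
    exact mul_le_mul bu2 bw2 (by positivity) (by positivity)
  have bu3w : (x-a/2)^3*(a-x) ≤ (a/2)^4 := by
    rw [show ((a:ℝ)/2)^4 = (a/2)^3*(a/2) by ring]
    exact mul_le_mul bu3 hwL hw0 (by positivity)
  -- coefficient-times-monomial bounds
  have q4a : c4 a B β*((x-a/2)^2*(a-x)) ≤ C4*(a/2)^3 :=
    mul_le_mul hc4 bu2w (mul_nonneg (by positivity) hw0) hC4
  have q4a0 : (0:ℝ) ≤ c4 a B β*((x-a/2)^2*(a-x)) :=
    mul_nonneg h40 (mul_nonneg (by positivity) hw0)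
  have q4b : c4 a B β*((x-a/2)^3) ≤ C4*(a/2)^3 :=
    mul_le_mul hc4 bu3 (pow_nonneg hu0 3) hC4
  have q4b0 : (0:ℝ) ≤ c4 a B β*((x-a/2)^3) := mul_nonneg h40 (pow_nonneg hu0 3)
  have q5a : c5 a B β*((x-a/2)^2*(a-x)^2) ≤ C5*(a/2)^4 :=
    mul_le_mul hc5 bu2w2 (by positivity) hC5
  have q5a0 : (0:ℝ) ≤ c5 a B β*((x-a/2)^2*(a-x)^2) := mul_nonneg h50 (by positivity)
  have q5b : c5 a B β*((x-a/2)^3*(a-x)) ≤ C5*(a/2)^4 :=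
    mul_le_mul hc5 bu3w (mul_nonneg (pow_nonneg hu0 3) hw0) hC5
  have q5b0 : (0:ℝ) ≤ c5 a B β*((x-a/2)^3*(a-x)) :=
    mul_nonneg h50 (mul_nonneg (pow_nonneg hu0 3) hw0)
  have q0a : c0 a B β*((x-a/2)^2) ≤ C0*(a/2)^2 :=
    mul_le_mul hc0 bu2 (by positivity) hC0
  have q0a0 : (0:ℝ) ≤ c0 a B β*((x-a/2)^2) := mul_nonneg h00 (by positivity)
  have p1 : (16/a^3)*((a-x)^2) ≤ (16/a^3)*(a/2)^2 :=
    mul_le_mul_of_nonneg_left bw2 (by positivity)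
  have p10 : (0:ℝ) ≤ (16/a^3)*((a-x)^2) := by positivity
  have p2 : (16/a^3)*((x-a/2)*(a-x)) ≤ (16/a^3)*(a/2)^2 :=
    mul_le_mul_of_nonneg_left buw (by positivity)
  have p20 : (0:ℝ) ≤ (16/a^3)*((x-a/2)*(a-x)) :=
    mul_nonneg (by positivity) (mul_nonneg hu0 hw0)
  have p3 : (80/a^4)*((x-a/2)*(a-x)^2) ≤ (80/a^4)*(a/2)^3 :=
    mul_le_mul_of_nonneg_left buw2 (by positivity)
  have p30 : (0:ℝ) ≤ (80/a^4)*((x-a/2)*(a-x)^2) :=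
    mul_nonneg (by positivity) (mul_nonneg hu0 (by positivity))
  have p4 : (80/a^4)*((x-a/2)^2*(a-x)) ≤ (80/a^4)*(a/2)^3 :=
    mul_le_mul_of_nonneg_left bu2w (by positivity)
  have p40 : (0:ℝ) ≤ (80/a^4)*((x-a/2)^2*(a-x)) :=
    mul_nonneg (by positivity) (mul_nonneg (by positivity) hw0)
  have s1 : (0:ℝ) ≤ (16/a^3)*(a/2)^2 := by positivity
  have s2 : (0:ℝ) ≤ (80/a^4)*(a/2)^3 := by positivity
  have s4 : (0:ℝ) ≤ C4*(a/2)^3 := by positivity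
  have s5 : (0:ℝ) ≤ C5*(a/2)^4 := by positivity
  have s0 : (0:ℝ) ≤ C0*(a/2)^2 := by positivity
  have hval1 : hh1 a B β x = rr' a B β x := by
    by_cases h : x ≤ a/2
    · have hxx : x = a/2 := le_antisymm h hx.1
      rw [hxx]
      simp only [hh1, if_pos le_rfl]
      exact (rr'_at_half ha).symm
    · simp only [hh1, if_neg h, if_pos hx.2]
  have hval2 : hh2 a B β x = rr'' a B β x := by
    by_cases h : x ≤ a/2
    · have hxx : x = a/2 := le_antisymm h hx.1
      rw [hxx]
      simp only [hh2, if_pos le_rfl]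
      exact (rr''_at_half ha).symm
    · simp only [hh2, if_neg h, if_pos hx.2]
  constructor
  · rw [hval1, abs_le]
    unfold rr'
    constructor
    · linarith [p1, p10, p2, p20, p3, p30, p4, p40, q4a, q4a0, q4b, q4b0,
        q5a, q5a0, q5b, q5b0, q0a, q0a0, s1, s2, s4, s5, s0]
    · linarith [p1, p10, p2, p20, p3, p30, p4, p40, q4a, q4a0, q4b, q4b0,
        q5a, q5a0, q5b, q5b0, q0a, q0a0, s1, s2, s4, s5, s0]
  · -- second derivative bound
    have m1 : (16/a^3)*(a-x) ≤ (16/a^3)*(a/2) := mul_le_mul_of_nonneg_left bw1 (by positivity)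
    have m10 : (0:ℝ) ≤ (16/a^3)*(a-x) := mul_nonneg (by positivity) hw0
    have m2 : (16/a^3)*(x-a/2) ≤ (16/a^3)*(a/2) := mul_le_mul_of_nonneg_left bu1 (by positivity)
    have m20 : (0:ℝ) ≤ (16/a^3)*(x-a/2) := mul_nonneg (by positivity) hu0
    have m3 : (80/a^4)*((a-x)^2) ≤ (80/a^4)*(a/2)^2 := mul_le_mul_of_nonneg_left bw2 (by positivity)
    have m30 : (0:ℝ) ≤ (80/a^4)*((a-x)^2) := by positivity
    have m4 : (80/a^4)*((x-a/2)*(a-x)) ≤ (80/a^4)*(a/2)^2 := mul_le_mul_of_nonneg_left buw (by positivity)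
    have m40 : (0:ℝ) ≤ (80/a^4)*((x-a/2)*(a-x)) := mul_nonneg (by positivity) (mul_nonneg hu0 hw0)
    have m5 : (80/a^4)*((x-a/2)^2) ≤ (80/a^4)*(a/2)^2 := mul_le_mul_of_nonneg_left bu2 (by positivity)
    have m50 : (0:ℝ) ≤ (80/a^4)*((x-a/2)^2) := by positivity
    have w6 : c4 a B β*((x-a/2)*(a-x)) ≤ C4*(a/2)^2 :=
      mul_le_mul hc4 buw (mul_nonneg hu0 hw0) hC4
    have w60 : (0:ℝ) ≤ c4 a B β*((x-a/2)*(a-x)) := mul_nonneg h40 (mul_nonneg hu0 hw0)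
    have w7 : c4 a B β*((x-a/2)^2) ≤ C4*(a/2)^2 := mul_le_mul hc4 bu2 (by positivity) hC4
    have w70 : (0:ℝ) ≤ c4 a B β*((x-a/2)^2) := mul_nonneg h40 (by positivity)
    have w8 : c5 a B β*((x-a/2)*(a-x)^2) ≤ C5*(a/2)^3 :=
      mul_le_mul hc5 buw2 (mul_nonneg hu0 (by positivity)) hC5
    have w80 : (0:ℝ) ≤ c5 a B β*((x-a/2)*(a-x)^2) :=
      mul_nonneg h50 (mul_nonneg hu0 (by positivity))
    have w9 : c5 a B β*((x-a/2)^2*(a-x)) ≤ C5*(a/2)^3 :=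
      mul_le_mul hc5 bu2w (mul_nonneg (by positivity) hw0) hC5
    have w90 : (0:ℝ) ≤ c5 a B β*((x-a/2)^2*(a-x)) :=
      mul_nonneg h50 (mul_nonneg (by positivity) hw0)
    have w10 : c5 a B β*((x-a/2)^3) ≤ C5*(a/2)^3 := mul_le_mul hc5 bu3 (pow_nonneg hu0 3) hC5
    have w100 : (0:ℝ) ≤ c5 a B β*((x-a/2)^3) := mul_nonneg h50 (pow_nonneg hu0 3)
    have w11 : c0 a B β*(x-a/2) ≤ C0*(a/2) := mul_le_mul hc0 bu1 hu0 hC0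
    have w110 : (0:ℝ) ≤ c0 a B β*(x-a/2) := mul_nonneg h00 hu0
    have z1 : (0:ℝ) ≤ (16/a^3)*(a/2) := by positivity
    have z2 : (0:ℝ) ≤ (80/a^4)*(a/2)^2 := by positivity
    have z4 : (0:ℝ) ≤ C4*(a/2)^2 := by positivity
    have z5 : (0:ℝ) ≤ C5*(a/2)^3 := by positivity
    have z0 : (0:ℝ) ≤ C0*(a/2) := by positivity
    rw [hval2, abs_le]
    unfold rr''
    constructor
    · linarith [m1, m10, m2, m20, m3, m30, m4, m40, m5, m50, w6, w60, w7, w70,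
        w8, w80, w9, w90, w10, w100, w11, w110, z1, z2, z4, z5, z0]
    · linarith [m1, m10, m2, m20, m3, m30, m4, m40, m5, m50, w6, w60, w7, w70,
        w8, w80, w9, w90, w10, w100, w11, w110, z1, z2, z4, z5, z0]

lemma hh_nonneg (ha : 0 < a) (hab : a < B) (hβ0 : 0 ≤ β) {x : ℝ} (hx : 0 ≤ x) :
    0 ≤ hh a B β x := by
  unfold hh
  split_ifs with h1 h2 h3
  · positivity
  · linarith [rr_nonneg ha hab hβ0 (not_le.mp h1).le h2]
  · exact pp_nonneg ha hab hβ0 h3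
  · exact (TT_pos ha hab (lt_trans (m_pos ha hab) (not_le.mp h3))).le

lemma hh_ge_one (ha : 0 < a) (hab : a < B) (hβ0 : 0 ≤ β) {x : ℝ}
    (hx1 : a/2 ≤ x) (hx2 : x ≤ a) : 1 ≤ hh a B β x := by
  unfold hh
  split_ifs with h1 h2
  · have hxx : x = a/2 := le_antisymm h1 hx1
    rw [hxx, show 4*((a:ℝ)/2)^2/a^2 = 1 by field_simp; ring]
  · linarith [rr_nonneg ha hab hβ0 hx1 hx2]
  all_goals exact absurd hx2 (by assumption)

lemma hh_eq_tail (ha : 0 < a) (hab : a < B) {x : ℝ} (hx : B ≤ x) :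
    hh a B β x = TT B β x := by
  have h3 : ¬ x ≤ mm a B := not_le.mpr (lt_of_lt_of_le (m_lt_B ha hab) hx)
  have h2 : ¬ x ≤ a := not_le.mpr (lt_of_lt_of_le hab hx)
  have h1 : ¬ x ≤ a/2 := not_le.mpr (lt_of_lt_of_le (lt_trans (half_lt_a ha) hab) hx)
  simp only [hh, if_neg h1, if_neg h2, if_neg h3]

end
end Stmt14Aux

open Stmt14Aux

/-- Lemma 4.3: for all `β` large enough there is `h_β : [0,∞) → [0,∞)`, `C²` on `(0,∞)`, with
`h_β(x) = 4x²/a²` on `[0,a/2]`, `h_β(x) = B^β (2x)^{−β}` for `x ≥ B`, `h_β ≥ 1` on `[a/2,a]`,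
`h_β` nonincreasing and convex on `[a,∞)`, and first and second derivatives uniformly bounded
on `[a/2,a]` over `β`. -/
theorem stmt14 (a B : ℝ) (ha : 0 < a) (hab : a < B) :
    ∃ M > (0:ℝ), ∃ h : ℝ → ℝ → ℝ,
      (∀ β ≥ M,
        (∀ x ≥ (0:ℝ), 0 ≤ h β x) ∧
        ContDiffOn ℝ 2 (h β) (Ioi (0:ℝ)) ∧
        (∀ x ∈ Icc (0:ℝ) (a / 2), h β x = 4 * x ^ 2 / a ^ 2) ∧
        (∀ x ≥ B, h β x = B ^ β * (2 * x) ^ (-β)) ∧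
        (∀ x ∈ Icc (a / 2) a, 1 ≤ h β x) ∧
        AntitoneOn (h β) (Ici a) ∧
        ConvexOn ℝ (Ici a) (h β)) ∧
      ∃ M' M'' : ℝ, ∀ β ≥ M, ∀ x ∈ Icc (a / 2) a,
        |deriv (h β) x| ≤ M' ∧ |deriv (deriv (h β)) x| ≤ M'' := by
  refine ⟨1, one_pos, fun β => hh a B β, ?_, ?_⟩
  · intro β hβ
    have hβ0 : (0:ℝ) ≤ β := by linarith
    refine ⟨?_, ?_, ?_, ?_, ?_, hh_antitone ha hab hβ0, hh_convex ha hab hβ0⟩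
    · intro x hx
      exact hh_nonneg ha hab hβ0 hx
    · exact (contDiff_hh ha hab).contDiffOn
    · intro x hx
      simp only [hh, if_pos hx.2]
    · intro x hx
      exact hh_eq_tail ha hab hx
    · intro x hx
      exact hh_ge_one ha hab hβ0 hx.1 hx.2
  · obtain ⟨M1, M2, hb⟩ := deriv_bounds ha hab
    refine ⟨M1, M2, ?_⟩
    intro β hβ x hx
    rw [deriv_hh ha hab, deriv_hh1 ha hab]
    exact hb β hβ x hx
end

section
/- Let g be C² on (0,∞), increasing concave, with g(x)=x^γ for x≤1 (0<γ<1) and g(x)=δ−x^{−η/2} for x≥2 (0<η<1, δ>2^{−η/2}). Suppose r:(0,∞)→ℝ satisfies r(x) ≤ a^η − x^η for all x>0 with a>0. Then there exist constants B', B''>0 such that for all x>0: (x g'(x) r(x) + x g''(x))/g(x) ≤ B' − γ(1−γ)/x if x≤1, ≤ B' if 1≤x≤2, and ≤ B' − B'' x^{η/2} if x≥2. -/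
set_option maxHeartbeats 1000000

open Set

/-- Drift computation for one coordinate of the Feller diffusion: with `g` increasing concave,
`C²` on `(0,∞)`, equal to `x^γ` on `(0,1]` and to `δ − x^{−η/2}` on `[2,∞)`, and
`r(x) ≤ a^η − x^η`, there are `B', B'' > 0` such that
`(x g'(x) r(x) + x g''(x))/g(x)` is bounded by `B' − γ(1−γ)/x` for `x ≤ 1`, by `B'` for
`1 ≤ x ≤ 2`, and by `B' − B'' x^{η/2}` for `x ≥ 2`. -/
theorem stmt16 (γ η δ a : ℝ) (hγ0 : 0 < γ) (hγ1 : γ < 1) (hη0 : 0 < η) (hη1 : η < 1)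
    (hδ : (2:ℝ) ^ (-(η / 2)) < δ) (ha : 0 < a)
    (g : ℝ → ℝ)
    (hg : ContDiffOn ℝ 2 g (Ioi (0:ℝ)))
    (hmono : StrictMonoOn g (Ici (0:ℝ)))
    (hconc : ConcaveOn ℝ (Ici (0:ℝ)) g)
    (hg1 : ∀ x ∈ Ioc (0:ℝ) 1, g x = x ^ γ)
    (hg2 : ∀ x ≥ (2:ℝ), g x = δ - x ^ (-(η / 2)))
    (r : ℝ → ℝ) (hr : ∀ x > (0:ℝ), r x ≤ a ^ η - x ^ η) :
    ∃ B' > (0:ℝ), ∃ B'' > (0:ℝ), ∀ x > (0:ℝ),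
      (x ≤ 1 →
        (x * deriv g x * r x + x * deriv (deriv g) x) / g x ≤ B' - γ * (1 - γ) / x) ∧
      (1 ≤ x → x ≤ 2 →
        (x * deriv g x * r x + x * deriv (deriv g) x) / g x ≤ B') ∧
      (2 ≤ x →
        (x * deriv g x * r x + x * deriv (deriv g) x) / g x ≤ B' - B'' * x ^ (η / 2)) := by
  have h2p : (0:ℝ) < (2:ℝ) ^ (-(η / 2)) := Real.rpow_pos_of_pos two_pos _
  have hδ0 : (0:ℝ) < δ := h2p.trans hδ
  have hgd : (0:ℝ) < δ - (2:ℝ) ^ (-(η / 2)) := sub_pos.mpr hδ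
  have haη : (0:ℝ) < a ^ η := Real.rpow_pos_of_pos ha η
  -- differentiability and continuity facts
  have hdiff : ∀ x > (0:ℝ), DifferentiableAt ℝ g x := fun x hx =>
    (hg.differentiableOn (by norm_num)).differentiableAt (isOpen_Ioi.mem_nhds hx)
  have hcont1 : ContinuousOn (deriv g) (Ioi (0:ℝ)) :=
    hg.continuousOn_deriv_of_isOpen isOpen_Ioi (by norm_num)
  have hcont2 : ContinuousOn (deriv (deriv g)) (Ioi (0:ℝ)) :=
    (hg.deriv_of_isOpen isOpen_Ioi (by norm_num)).continuousOn_deriv_of_isOpen isOpen_Ioi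
      (le_refl 1)
  -- g values
  have hg1' : g 1 = 1 := by simpa using hg1 1 ⟨one_pos, le_refl 1⟩
  have hge1 : ∀ x ≥ (1:ℝ), 1 ≤ g x := by
    intro x hx
    rcases eq_or_lt_of_le hx with h | h
    · rw [← h, hg1']
    · have := hmono (mem_Ici.mpr zero_le_one) (mem_Ici.mpr (by linarith : (0:ℝ) ≤ x)) h
      rw [hg1'] at this; linarith
  have hgpos : ∀ x > (0:ℝ), 0 < g x := by
    intro x hx
    rcases le_or_gt x 1 with h | h
    · rw [hg1 x ⟨hx, h⟩]; positivity
    · linarith [hge1 x h.le]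
  -- deriv nonneg from monotonicity
  have hderiv_nonneg : ∀ x > (0:ℝ), 0 ≤ deriv g x := by
    intro x hx
    have hd : HasDerivAt g (deriv g x) x := (hdiff x hx).hasDerivAt
    have ht : Filter.Tendsto (slope g x) (nhdsWithin x (Ioi x)) (nhds (deriv g x)) :=
      (hasDerivAt_iff_tendsto_slope.mp hd).mono_left
        (nhdsWithin_mono x fun y hy => Set.mem_compl_singleton_iff.mpr (ne_of_gt hy))
    refine ge_of_tendsto ht ?_
    filter_upwards [self_mem_nhdsWithin] with y hy
    rw [slope_def_field]
    have hxy : x < y := hy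
    have : g x ≤ g y := (hmono hx.le (le_of_lt (hx.trans hxy)) hxy).le
    have hden : 0 < y - x := by linarith
    exact div_nonneg (by linarith) hden.le
  -- derivative formulas on (0,1)
  have hd1 : ∀ x ∈ Ioo (0:ℝ) 1, deriv g x = γ * x ^ (γ - 1) := by
    intro x hx
    have hev : g =ᶠ[nhds x] fun y => y ^ γ :=
      Filter.eventually_of_mem (isOpen_Ioo.mem_nhds hx) fun y hy => hg1 y ⟨hy.1, hy.2.le⟩
    rw [hev.deriv_eq, Real.deriv_rpow_const x]
  have hd2 : ∀ x ∈ Ioo (0:ℝ) 1, deriv (deriv g) x = γ * ((γ - 1) * x ^ (γ - 2)) := by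
    intro x hx
    have hev : deriv g =ᶠ[nhds x] fun y => γ * y ^ (γ - 1) :=
      Filter.eventually_of_mem (isOpen_Ioo.mem_nhds hx) fun y hy => hd1 y hy
    rw [hev.deriv_eq, deriv_const_mul _ (Real.differentiableAt_rpow_const_of_ne _ (ne_of_gt hx.1)),
      Real.deriv_rpow_const x,
      show γ - 1 - 1 = γ - 2 by ring]
  -- derivative formulas on (2,∞)
  have hd1' : ∀ x ∈ Ioi (2:ℝ), deriv g x = η / 2 * x ^ (-(η / 2) - 1) := by
    intro x hx
    have hev : g =ᶠ[nhds x] fun y => δ - y ^ (-(η / 2)) :=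
      Filter.eventually_of_mem (isOpen_Ioi.mem_nhds hx) fun y hy => hg2 y (le_of_lt hy)
    have hx0 : x ≠ 0 := by have : (2:ℝ) < x := hx; positivity
    rw [hev.deriv_eq, deriv_const_sub, Real.deriv_rpow_const x]
    ring
  have hd2' : ∀ x ∈ Ioi (2:ℝ), deriv (deriv g) x = η / 2 * ((-(η / 2) - 1) * x ^ (-(η / 2) - 2)) := by
    intro x hx
    have hx0 : x ≠ 0 := by have : (2:ℝ) < x := hx; positivity
    have hev : deriv g =ᶠ[nhds x] fun y => η / 2 * y ^ (-(η / 2) - 1) :=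
      Filter.eventually_of_mem (isOpen_Ioi.mem_nhds hx) fun y hy => hd1' y hy
    rw [hev.deriv_eq, deriv_const_mul _ (Real.differentiableAt_rpow_const_of_ne _ hx0),
      Real.deriv_rpow_const x, show -(η / 2) - 1 - 1 = -(η / 2) - 2 by ring]
  -- compact bounds on [1,2]
  have hsub : Icc (1:ℝ) 2 ⊆ Ioi (0:ℝ) := fun y hy => lt_of_lt_of_le one_pos hy.1
  obtain ⟨M1, hM1⟩ := (isCompact_Icc : IsCompact (Icc (1:ℝ) 2)).exists_bound_of_continuousOn
    (hcont1.mono hsub)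
  obtain ⟨M2, hM2⟩ := (isCompact_Icc : IsCompact (Icc (1:ℝ) 2)).exists_bound_of_continuousOn
    (hcont2.mono hsub)
  set M := max M1 M2 with hM
  have hM0 : 0 ≤ M := le_trans (norm_nonneg (deriv g 1))
    (le_trans (hM1 1 (by norm_num)) (le_max_left _ _))
  set C0 := 2 * M * a ^ η + 2 * M with hC0def
  have hC0 : 0 ≤ C0 := by positivity
  -- middle bound
  have hmid : ∀ x ∈ Icc (1:ℝ) 2,
      (x * deriv g x * r x + x * deriv (deriv g) x) / g x ≤ C0 := by
    intro x hx
    have hx0 : (0:ℝ) < x := hsub hx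
    have hg'le : deriv g x ≤ M := by
      have h := hM1 x hx
      rw [Real.norm_eq_abs] at h
      exact le_trans (le_abs_self _) (le_trans h (le_max_left _ _))
    have hg''abs : |deriv (deriv g) x| ≤ M := by
      have h := hM2 x hx
      rw [Real.norm_eq_abs] at h
      exact le_trans h (le_max_right _ _)
    have h1 : x * deriv g x * r x ≤ 2 * M * a ^ η := by
      have hrle : r x ≤ a ^ η := by
        have := hr x hx0
        have := Real.rpow_pos_of_pos hx0 η
        linarith
      have hxg : 0 ≤ x * deriv g x := mul_nonneg hx0.le (hderiv_nonneg x hx0)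
      have hxg2 : x * deriv g x ≤ 2 * M := by
        nlinarith [hderiv_nonneg x hx0, hx.2, hx.1]
      calc x * deriv g x * r x ≤ x * deriv g x * a ^ η := by nlinarith
        _ ≤ 2 * M * a ^ η := by nlinarith
    have h2 : x * deriv (deriv g) x ≤ 2 * M := by
      rcases le_total 0 (deriv (deriv g) x) with h | h
      · nlinarith [le_trans (le_abs_self _) hg''abs, hx.2]
      · nlinarith
    rw [div_le_iff₀ (hgpos x hx0)]
    have hge := hge1 x hx.1
    nlinarith
  -- bound for x > 2
  set B'' := η / (2 * δ) with hB''def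
  have hB''pos : 0 < B'' := by positivity
  set D := η / 2 * (2:ℝ) ^ (-(η / 2)) * a ^ η / (δ - (2:ℝ) ^ (-(η / 2))) with hDdef
  have hD0 : 0 ≤ D := by positivity
  have htail : ∀ x > (2:ℝ),
      (x * deriv g x * r x + x * deriv (deriv g) x) / g x ≤ D - B'' * x ^ (η / 2) := by
    intro x hx
    have hx0 : (0:ℝ) < x := by linarith
    have hx0' : x ≠ 0 := ne_of_gt hx0
    have hu0 : (0:ℝ) < x ^ (-(η / 2)) := Real.rpow_pos_of_pos hx0 _
    have hu2 : x ^ (-(η / 2)) ≤ (2:ℝ) ^ (-(η / 2)) := by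
      rw [Real.rpow_neg hx0.le, Real.rpow_neg (by norm_num : (0:ℝ) ≤ 2)]
      have h1 : (0:ℝ) < (2:ℝ) ^ (η / 2) := Real.rpow_pos_of_pos two_pos _
      have h2 : (2:ℝ) ^ (η / 2) ≤ x ^ (η / 2) :=
        Real.rpow_le_rpow (by norm_num) hx.le (by positivity)
      exact inv_anti₀ h1 h2
    have hgx : g x = δ - x ^ (-(η / 2)) := hg2 x hx.le
    have hgpos' : 0 < g x := hgpos x hx0
    have hglb : δ - (2:ℝ) ^ (-(η / 2)) ≤ g x := by rw [hgx]; linarith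
    have hgub : g x ≤ δ := by rw [hgx]; linarith
    have e1 : x * deriv g x = η / 2 * x ^ (-(η / 2)) := by
      rw [hd1' x hx]
      have : x * x ^ (-(η / 2) - 1) = x ^ (-(η / 2)) := by
        rw [mul_comm, ← Real.rpow_add_one hx0' , show -(η / 2) - 1 + 1 = -(η / 2) by ring]
      rw [← this]; ring
    have e2 : x * deriv (deriv g) x ≤ 0 := by
      rw [hd2' x hx]
      have hv : (0:ℝ) < x ^ (-(η / 2) - 2) := Real.rpow_pos_of_pos hx0 _
      have hxv : (0:ℝ) < x * x ^ (-(η / 2) - 2) := mul_pos hx0 hv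
      nlinarith [mul_pos (mul_pos (half_pos hη0) hxv) (show (0:ℝ) < η / 2 + 1 by linarith)]
    have e3 : x ^ (-(η / 2)) * x ^ η = x ^ (η / 2) := by
      rw [← Real.rpow_add hx0, show -(η / 2) + η = η / 2 by ring]
    have hxp : (0:ℝ) < x ^ (η / 2) := Real.rpow_pos_of_pos hx0 _
    have key1 : x * deriv g x * r x / g x ≤ D - B'' * x ^ (η / 2) := by
      have step1 : x * deriv g x * r x ≤ η / 2 * x ^ (-(η / 2)) * (a ^ η - x ^ η) := by
        rw [e1]
        exact mul_le_mul_of_nonneg_left (hr x hx0) (by positivity)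
      have step2 : x * deriv g x * r x / g x ≤
          η / 2 * x ^ (-(η / 2)) * (a ^ η - x ^ η) / g x :=
        (div_le_div_iff_of_pos_right hgpos').mpr step1
      refine step2.trans ?_
      have esplit : η / 2 * x ^ (-(η / 2)) * (a ^ η - x ^ η) / g x =
          η / 2 * x ^ (-(η / 2)) * a ^ η / g x - η / 2 * x ^ (η / 2) / g x := by
        rw [← e3]; ring
      rw [esplit]
      have f1 : η / 2 * x ^ (-(η / 2)) * a ^ η / g x ≤ D := by
        rw [hDdef]
        apply div_le_div₀ (by positivity) _ hgd hglb
        exact mul_le_mul_of_nonneg_right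
          (mul_le_mul_of_nonneg_left hu2 (by positivity : (0:ℝ) ≤ η / 2)) haη.le
      have f2 : B'' * x ^ (η / 2) ≤ η / 2 * x ^ (η / 2) / g x := by
        have : η / 2 * x ^ (η / 2) / δ ≤ η / 2 * x ^ (η / 2) / g x :=
          div_le_div_of_nonneg_left (mul_nonneg (by positivity : (0:ℝ) ≤ η / 2) hxp.le)
            hgpos' hgub
        refine le_trans (le_of_eq ?_) this
        rw [hB''def]
        field_simp
      linarith
    have key2 : x * deriv (deriv g) x / g x ≤ 0 :=
      div_nonpos_iff.mpr (Or.inr ⟨e2, hgpos'.le⟩)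
    calc (x * deriv g x * r x + x * deriv (deriv g) x) / g x
        = x * deriv g x * r x / g x + x * deriv (deriv g) x / g x := by rw [add_div]
      _ ≤ D - B'' * x ^ (η / 2) := by linarith
  -- positivity of the constant pieces
  have hP1 : 0 ≤ γ * a ^ η := mul_nonneg hγ0.le haη.le
  have hP2 : 0 ≤ γ * (1 - γ) := mul_nonneg hγ0.le (by linarith)
  have hP3 : 0 ≤ η / δ := by positivity
  -- choose constants
  refine ⟨C0 + γ * a ^ η + γ * (1 - γ) + η / δ + D + 1, by positivity, B'', hB''pos, ?_⟩
  intro x hx0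
  refine ⟨?_, ?_, ?_⟩
  · -- x ≤ 1
    intro hx1
    rcases lt_or_eq_of_le hx1 with h | h
    · have hxm : x ∈ Ioo (0:ℝ) 1 := ⟨hx0, h⟩
      have hxγ : (0:ℝ) < x ^ γ := Real.rpow_pos_of_pos hx0 γ
      have e3 : x ^ (γ - 1) = x ^ γ / x := by
        rw [eq_div_iff (ne_of_gt hx0), ← Real.rpow_add_one (ne_of_gt hx0),
          show γ - 1 + 1 = γ by ring]
      have e4 : x ^ (γ - 2) = x ^ γ / x / x := by
        rw [div_div, eq_div_iff (mul_ne_zero (ne_of_gt hx0) (ne_of_gt hx0)),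
          show x ^ (γ - 2) * (x * x) = x ^ (γ - 2) * x * x by ring,
          ← Real.rpow_add_one (ne_of_gt hx0), ← Real.rpow_add_one (ne_of_gt hx0),
          show γ - 2 + 1 + 1 = γ by ring]
      have key : (x * deriv g x * r x + x * deriv (deriv g) x) / g x
          = γ * r x + γ * (γ - 1) / x := by
        rw [hd1 x hxm, hd2 x hxm, hg1 x ⟨hx0, hx1⟩, e3, e4]
        field_simp
      rw [key]
      have hrx := hr x hx0
      have hxη : (0:ℝ) < x ^ η := Real.rpow_pos_of_pos hx0 η
      have h1 : γ * r x ≤ γ * a ^ η := by nlinarith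
      have h2 : γ * (γ - 1) / x = -(γ * (1 - γ) / x) := by ring
      rw [h2]
      linarith
    · subst h
      have := hmid 1 (by norm_num)
      norm_num at this ⊢
      linarith
  · -- 1 ≤ x ≤ 2
    intro h1 h2
    have := hmid x ⟨h1, h2⟩
    linarith
  · -- x ≥ 2
    intro h2
    rcases eq_or_lt_of_le h2 with h | h
    · subst h
      have hmid2 := hmid 2 (by norm_num)
      have hexp : (2:ℝ) ^ (η / 2) ≤ 2 := by
        calc (2:ℝ) ^ (η / 2) ≤ (2:ℝ) ^ (1:ℝ) :=
          Real.rpow_le_rpow_of_exponent_le one_le_two (by linarith)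
          _ = 2 := Real.rpow_one 2
      have hBe : B'' * (2:ℝ) ^ (η / 2) ≤ η / δ := by
        have h2p' : (0:ℝ) < (2:ℝ) ^ (η / 2) := Real.rpow_pos_of_pos two_pos _
        have : B'' * (2:ℝ) ^ (η / 2) ≤ B'' * 2 :=
          mul_le_mul_of_nonneg_left hexp hB''pos.le
        have heq : B'' * 2 = η / δ := by rw [hB''def]; field_simp
        linarith
      linarith
    · have := htail x h
      linarith
end
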